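/- arXiv:2205.13859 — 5 statements merged into one kernel-verified Lean document; each statement's English description precedes it below -/
import Mathlib

section
/- If f : X → ℂ is harmonic on X and belongs to ℓ^p of the counting measure for some 1 ≤ p < ∞ (i.e. Σ_{x∈X} |f(x)|^p < ∞), then f is identically zero. -/
open scoped BigOperators
open scoped Classical

namespace TreeBergman

variable {V : Type*}

/-- Harmonicity at a vertex: (q+1) f(v) = Σ_{u ∼ v} f(u). -/
def HarmonicAt (G : SimpleGraph V) [G.LocallyFinite] (q : ℕ) (f : V → ℂ) (v : V) : Prop :=
  ((q : ℂ) + 1) * f v = ∑ u ∈ G.neighborFinset v, f u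

/-- Harmonicity on all of X. -/
def Harmonic (G : SimpleGraph V) [G.LocallyFinite] (q : ℕ) (f : V → ℂ) : Prop :=
  ∀ v, HarmonicAt G q f v

/-- The sector T_v: the set of x such that v lies on the geodesic from o to x. -/
def sector (G : SimpleGraph V) (o v : V) : Set V :=
  {x | G.dist o x = G.dist o v + G.dist v x}

/-- Successors of v. -/
noncomputable def succs (G : SimpleGraph V) [G.LocallyFinite] (o v : V) : Finset V :=
  (G.neighborFinset v).filter fun u => G.dist o u = G.dist o v + 1

/-- a_n = Σ_{j=0}^n q^{-j}. -/
noncomputable def aseq (q : ℕ) (n : ℕ) : ℝ :=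
  ∑ j ∈ Finset.range (n + 1), ((q : ℝ)⁻¹) ^ j

/-- b_n = Σ_{m=n+1}^∞ σ_m a_{m-n-1} (Σ_{k=0}^{m-n-1} q^k), for radial density w. -/
noncomputable def bseq (q : ℕ) (w : ℕ → ℝ) (n : ℕ) : ℝ :=
  ∑' ℓ : ℕ, w (n + 1 + ℓ) * aseq q ℓ * ∑ k ∈ Finset.range (ℓ + 1), (q : ℝ) ^ k

/-- pred is the predecessor function. -/
def IsPred (G : SimpleGraph V) (o : V) (pred : V → V) : Prop :=
  ∀ v, v ≠ o → G.Adj v (pred v) ∧ G.dist o (pred v) + 1 = G.dist o v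

/-- The harmonic extension g_n^H. -/
noncomputable def hext (G : SimpleGraph V) (o : V) (pred : V → V) (q : ℕ)
    (g : V → ℂ) (n : ℕ) (x : V) : ℂ :=
  if G.dist o x ≤ n then g x
  else ((aseq q (G.dist o x - n - 1) : ℝ) : ℂ) * g (pred^[G.dist o x - n - 1] x)
      - ((aseq q (G.dist o x - n - 1) - 1 : ℝ) : ℂ) * g (pred^[G.dist o x - n] x)

/-- The auxiliary function Γ. -/
noncomputable def Gam (G : SimpleGraph V) [G.LocallyFinite] (o : V) (v z x : V) : ℝ :=
  if (z ∈ sector G o v ∧ z ≠ v) ∧ (x ∈ sector G o v ∧ x ≠ v) then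
    if ∃ y ∈ succs G o v, z ∈ sector G o y ∧ x ∈ sector G o y then
      (((succs G o v).card : ℝ) - 1) / ((succs G o v).card : ℝ)
    else -1 / ((succs G o v).card : ℝ)
  else 0

/-- The 𝒜²(σ) inner product with density σ. -/
noncomputable def ip (σ : V → ℝ) (f g : V → ℂ) : ℂ :=
  ∑' x, f x * (starRingEnd ℂ) (g x) * (σ x : ℂ)

/-- The weight q^{-α|x|}. -/
noncomputable def expw (q : ℕ) (G : SimpleGraph V) (o : V) (α : ℝ) (x : V) : ℝ :=
  (q : ℝ) ^ (-(α * (G.dist o x : ℝ)))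

/-- K is the reproducing kernel of 𝒜²_γ. -/
def IsRK (G : SimpleGraph V) [G.LocallyFinite] (q : ℕ) (o : V) (γ : ℝ)
    (K : V → V → ℝ) : Prop :=
  ∀ z : V,
    Harmonic G q (fun x => (K z x : ℂ)) ∧
    Summable (fun x => (K z x) ^ 2 * expw q G o γ x) ∧
    ∀ g : V → ℂ, Harmonic G q g →
      Summable (fun x => ‖g x‖ ^ 2 * expw q G o γ x) →
      Summable (fun x => g x * ((K z x : ℂ)) * ((expw q G o γ x : ℝ) : ℂ)) ∧
      ∑' x, g x * ((K z x : ℂ)) * ((expw q G o γ x : ℝ) : ℂ) = g z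

/-- Integral operator with real kernel acting on complex functions. -/
noncomputable def applyKer (ker : V → V → ℝ) (f : V → ℂ) (z : V) : ℂ :=
  ∑' x, (ker z x : ℂ) * f x

/-- Boundedness on L^p of the weight w of the integral operator with kernel ker. -/
def BddOn (p : ℝ) (w : V → ℝ) (ker : V → V → ℝ) : Prop :=
  ∃ C : ℝ, 0 < C ∧ ∀ f : V → ℂ, Summable (fun x => ‖f x‖ ^ p * w x) →
    Summable (fun z => ‖applyKer ker f z‖ ^ p * w z) ∧
    ∑' z, ‖applyKer ker f z‖ ^ p * w z ≤ C * ∑' x, ‖f x‖ ^ p * w x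

end TreeBergman

section Aux

open SimpleGraph

/-- A connected acyclic (q+1)-regular graph with q ≥ 2 is infinite. -/
lemma aux_infinite {V : Type*} (G : SimpleGraph V) [G.LocallyFinite] (q : ℕ) (hq : 2 ≤ q)
    (hconn : G.Connected) (hacyc : G.IsAcyclic)
    (hreg : G.IsRegularOfDegree (q + 1)) : Infinite V := by
  classical
  rcases finite_or_infinite V with hfin | hfin
  · exfalso
    haveI : Fintype V := Fintype.ofFinite V
    haveI : DecidableEq V := Classical.decEq _
    haveI : DecidableRel G.Adj := Classical.decRel _
    have htree : G.IsTree := ⟨hconn, hacyc⟩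
    have hcard := htree.card_edgeFinset
    have hreg' : ∀ v : V, @SimpleGraph.degree V G v (G.neighborSetFintype v) = q + 1 := by
      intro v
      have h := hreg v
      convert h using 2 <;> exact Subsingleton.elim _ _
    have hsum := G.sum_degrees_eq_twice_card_edges
    have h2 : Fintype.card V * (q + 1) = 2 * G.edgeFinset.card := by
      rw [← hsum]
      simp [hreg', Finset.sum_const, Finset.card_univ, mul_comm]
    have hpos : 1 ≤ Fintype.card V := Fintype.card_pos_iff.mpr hconn.nonempty
    have h3 : Fintype.card V * 3 ≤ Fintype.card V * (q + 1) :=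
      Nat.mul_le_mul_left (Fintype.card V) (show 3 ≤ q + 1 by omega)
    omega
  · exact hfin

end Aux

open SimpleGraph in
theorem statement0_aux
    {V : Type*} (G : SimpleGraph V) [G.LocallyFinite] (q : ℕ) (hq : 2 ≤ q)
    (hconn : G.Connected) (hacyc : G.IsAcyclic)
    (hreg : G.IsRegularOfDegree (q + 1))
    (f : V → ℂ) (p : ℝ) (hp : 1 ≤ p)
    (hharm : ∀ v, ((q : ℂ) + 1) * f v = ∑ u ∈ G.neighborFinset v, f u)
    (hsum : Summable fun x => ‖f x‖ ^ p) :
    f = 0 := by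
  classical
  haveI := aux_infinite G q hq hconn hacyc hreg
  by_contra hne
  obtain ⟨v0, hv0⟩ : ∃ v0, f v0 ≠ 0 := by
    by_contra h
    push_neg at h
    exact hne (funext fun x => h x)
  have hp0 : 0 < p := lt_of_lt_of_le one_pos hp
  have hnv0 : 0 < ‖f v0‖ := norm_pos_iff.mpr hv0
  -- the set where ‖f x‖ ≥ ‖f v0‖ is finite
  have hfin : {x | ‖f v0‖ ≤ ‖f x‖}.Finite := by
    have hε : (0 : ℝ) < ‖f v0‖ ^ p := Real.rpow_pos_of_pos hnv0 p
    have ht := hsum.tendsto_cofinite_zero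
    have hev : ∀ᶠ x in Filter.cofinite, ‖f x‖ ^ p < ‖f v0‖ ^ p :=
      ht.eventually (Filter.Tendsto.eventually_lt_const hε Filter.tendsto_id |>.mono fun _ h => h)
    have := Filter.eventually_cofinite.mp hev
    refine this.subset fun x hx => ?_
    simp only [Set.mem_setOf_eq, not_lt]
    exact Real.rpow_le_rpow (norm_nonneg _) hx (le_of_lt hp0)
  obtain ⟨v, hvmem, hvmax⟩ :=
    hfin.toFinset.exists_max_image (fun x => ‖f x‖)
      ⟨v0, hfin.mem_toFinset.mpr (le_refl ‖f v0‖)⟩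
  set M : ℝ := ‖f v‖ with hM
  have hMv0 : ‖f v0‖ ≤ M := hvmax v0 (hfin.mem_toFinset.mpr (le_refl ‖f v0‖))
  have hMpos : 0 < M := lt_of_lt_of_le hnv0 hMv0
  have hbound : ∀ x, ‖f x‖ ≤ M := by
    intro x
    by_cases hx : ‖f v0‖ ≤ ‖f x‖
    · exact hvmax x (hfin.mem_toFinset.mpr hx)
    · exact le_trans (le_of_lt (not_le.mp hx)) hMv0
  -- the real harmonic function h
  set h : V → ℝ := fun x => ((starRingEnd ℂ) (f v) * f x).re with hh
  have hhle : ∀ x, h x ≤ M * M := by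
    intro x
    calc h x ≤ ‖(starRingEnd ℂ) (f v) * f x‖ := Complex.re_le_norm _
    _ = M * ‖f x‖ := by rw [norm_mul, RingHomIsometric.norm_map]
    _ ≤ M * M := mul_le_mul_of_nonneg_left (hbound x) (le_of_lt hMpos)
  have hhv : h v = M * M := by
    simp only [hh]
    rw [mul_comm, Complex.mul_conj']
    simp [Complex.normSq_eq_norm_sq, sq, hM]
  -- real harmonicity
  have hharmR : ∀ x, ((q : ℝ) + 1) * h x = ∑ u ∈ G.neighborFinset x, h u := by
    intro x
    have := congrArg (fun z => ((starRingEnd ℂ) (f v) * z).re) (hharm x)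
    rw [Finset.mul_sum] at this
    rw [Complex.re_sum] at this
    convert this using 1
    have : (starRingEnd ℂ) (f v) * (((q : ℂ) + 1) * f x)
        = (((q : ℝ) + 1 : ℝ) : ℂ) * ((starRingEnd ℂ) (f v) * f x) := by
      push_cast
      ring
    rw [this, Complex.re_ofReal_mul]
  -- card of neighbors
  have hcard : ∀ x, (G.neighborFinset x).card = q + 1 := fun x => hreg x
  -- propagation
  have hstep : ∀ x, h x = M * M → ∀ y, G.Adj x y → h y = M * M := by
    intro x hx y hxy
    by_contra hy
    have hylt : h y < M * M := lt_of_le_of_ne (hhle y) hy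
    have hlt : ∑ u ∈ G.neighborFinset x, h u < ∑ u ∈ G.neighborFinset x, (M * M) := by
      refine Finset.sum_lt_sum (fun u _ => hhle u) ⟨y, ?_, hylt⟩
      rw [SimpleGraph.mem_neighborFinset]
      exact hxy
    rw [Finset.sum_const, hcard x, nsmul_eq_mul] at hlt
    rw [← hharmR x, hx] at hlt
    push_cast at hlt
    exact lt_irrefl _ hlt
  have hprop : ∀ (a b : V) (w : G.Walk a b), h a = M * M → h b = M * M := by
    intro a b w
    induction w with
    | nil => exact id
    | cons hab _ ih => exact fun ha => ih (hstep _ ha _ hab)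
  have hall : ∀ x, h x = M * M := fun x => hprop v x (hconn v x).some hhv
  -- contradiction with summability
  have hgeM : ∀ x, M ≤ ‖f x‖ := by
    intro x
    have h1 : M * M ≤ M * ‖f x‖ := by
      rw [← hall x]
      calc h x ≤ ‖(starRingEnd ℂ) (f v) * f x‖ := Complex.re_le_norm _
      _ = M * ‖f x‖ := by rw [norm_mul, RingHomIsometric.norm_map]
    exact le_of_mul_le_mul_left h1 hMpos
  have hMp : (0 : ℝ) < M ^ p := Real.rpow_pos_of_pos hMpos p
  have hev : ∀ᶠ x in Filter.cofinite, ‖f x‖ ^ p < M ^ p :=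
    hsum.tendsto_cofinite_zero.eventually
      (Filter.Tendsto.eventually_lt_const hMp Filter.tendsto_id |>.mono fun _ hh => hh)
  obtain ⟨x, hx⟩ := hev.exists
  have : M ^ p ≤ ‖f x‖ ^ p := Real.rpow_le_rpow (le_of_lt hMpos) (hgeM x) (le_of_lt hp0)
  linarith

open TreeBergman in
/-- A harmonic function on a q-homogeneous tree (q ≥ 2) belonging to
ℓ^p of the counting measure for some 1 ≤ p < ∞ is identically zero. -/
theorem statement0
    {V : Type*} (G : SimpleGraph V) [G.LocallyFinite] (q : ℕ) (hq : 2 ≤ q)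
    (hconn : G.Connected) (hacyc : G.IsAcyclic)
    (hreg : G.IsRegularOfDegree (q + 1))
    (f : V → ℂ) (p : ℝ) (hp : 1 ≤ p)
    (hharm : Harmonic G q f)
    (hsum : Summable fun x => ‖f x‖ ^ p) :
    f = 0 :=
  statement0_aux G q hq hconn hacyc hreg f p hp hharm hsum
end

section
/- Let y ∈ X with y ≠ o. If f : X → ℂ is harmonic on the sector T_y, then for every integer n ≥ |y| one has Σ_{x ∈ T_y, |x| = n} f(x) = (Σ_{j=0}^{n-|y|} q^j) f(y) − (Σ_{j=0}^{n-|y|-1} q^j) f(p(y)). Conversely, if f : X → ℂ is radial on T_y (its value at x ∈ T_y depends only on |x|) and satisfies this identity for every n ≥ |y|, then f is harmonic on T_y. -/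
open scoped BigOperators
open scoped Classical

namespace TreeAux

open SimpleGraph TreeBergman

variable {V : Type*} {G : SimpleGraph V}

lemma exists_geodesic (hconn : G.Connected) (o u : V) :
    ∃ p : G.Walk o u, p.IsPath ∧ p.length = G.dist o u := by
  obtain ⟨p, hp⟩ := (hconn.preconnected o u).exists_walk_length_eq_dist
  exact ⟨p.bypass, p.bypass_isPath,
    le_antisymm (le_trans p.length_bypass_le hp.le) (SimpleGraph.dist_le _)⟩

lemma dist_mem_support_le {o u w : V} (p : G.Walk o u) (hw : w ∈ p.support) :
    G.dist o w ≤ p.length :=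
  le_trans (SimpleGraph.dist_le _) (p.length_takeUntil_le hw)

lemma eq_end_of_dist {o u w : V} (p : G.Walk o u) (hlen : p.length = G.dist o u)
    (hw : w ∈ p.support) (hd : G.dist o u ≤ G.dist o w) : w = u := by
  have h1 : G.dist o w ≤ (p.takeUntil w hw).length := SimpleGraph.dist_le _
  have h2 : (p.takeUntil w hw).length + (p.dropUntil w hw).length = p.length := by
    rw [← SimpleGraph.Walk.length_append, p.take_spec hw]
  have h3 : (p.dropUntil w hw).length = 0 := by omega
  exact SimpleGraph.Walk.eq_of_length_eq_zero h3

lemma adj_dist_ne (hconn : G.Connected) (hacyc : G.IsAcyclic) {o u v : V}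
    (h : G.Adj u v) : G.dist o u ≠ G.dist o v := by
  intro he
  obtain ⟨P, hP, hPl⟩ := exists_geodesic hconn o u
  obtain ⟨Q, hQ, hQl⟩ := exists_geodesic hconn o v
  have hvP : v ∉ P.support := by
    intro hv
    exact h.ne' (eq_end_of_dist P hPl hv (by omega))
  have R1 : (SimpleGraph.Walk.cons h.symm P.reverse).IsPath := by
    rw [SimpleGraph.Walk.cons_isPath_iff]
    exact ⟨hP.reverse, by simpa [SimpleGraph.Walk.support_reverse] using hvP⟩
  have huniq := SimpleGraph.isAcyclic_iff_path_unique.mp hacyc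
    ⟨_, R1⟩ ⟨Q.reverse, hQ.reverse⟩
  have hlen := congrArg (fun p : G.Path v o => (p : G.Walk v o).length) huniq
  simp only [SimpleGraph.Walk.length_cons, SimpleGraph.Walk.length_reverse] at hlen
  omega

lemma back_unique (hconn : G.Connected) (hacyc : G.IsAcyclic) {o v u1 u2 : V}
    (h1 : G.Adj u1 v) (hd1 : G.dist o u1 + 1 = G.dist o v)
    (h2 : G.Adj u2 v) (hd2 : G.dist o u2 + 1 = G.dist o v) : u1 = u2 := by
  obtain ⟨P1, hP1, hP1l⟩ := exists_geodesic hconn o u1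
  obtain ⟨P2, hP2, hP2l⟩ := exists_geodesic hconn o u2
  have hvP1 : v ∉ P1.support := by
    intro hv
    have := dist_mem_support_le P1 hv
    omega
  have hvP2 : v ∉ P2.support := by
    intro hv
    have := dist_mem_support_le P2 hv
    omega
  have R1 : (SimpleGraph.Walk.cons h1.symm P1.reverse).IsPath := by
    rw [SimpleGraph.Walk.cons_isPath_iff]
    exact ⟨hP1.reverse, by simpa [SimpleGraph.Walk.support_reverse] using hvP1⟩
  have R2 : (SimpleGraph.Walk.cons h2.symm P2.reverse).IsPath := by
    rw [SimpleGraph.Walk.cons_isPath_iff]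
    exact ⟨hP2.reverse, by simpa [SimpleGraph.Walk.support_reverse] using hvP2⟩
  have huniq := SimpleGraph.isAcyclic_iff_path_unique.mp hacyc ⟨_, R1⟩ ⟨_, R2⟩
  have := congrArg (fun p : G.Path v o => (p : G.Walk v o).getVert 1) huniq
  simpa [SimpleGraph.Walk.getVert_cons_succ] using this

lemma adj_dist_cases (hconn : G.Connected) (hacyc : G.IsAcyclic) {o u v : V}
    (h : G.Adj u v) :
    G.dist o u + 1 = G.dist o v ∨ G.dist o v + 1 = G.dist o u := by
  have h1 : G.dist o u ≤ G.dist o v + 1 := by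
    have := hconn.dist_triangle (u := o) (v := v) (w := u)
    rwa [SimpleGraph.dist_eq_one_iff_adj.mpr h.symm] at this
  have h2 : G.dist o v ≤ G.dist o u + 1 := by
    have := hconn.dist_triangle (u := o) (v := u) (w := v)
    rwa [SimpleGraph.dist_eq_one_iff_adj.mpr h] at this
  have := adj_dist_ne hconn hacyc (o := o) h
  omega

section Pred

variable [G.LocallyFinite] {o : V} {pred : V → V}

omit [G.LocallyFinite] in
lemma eq_pred (hconn : G.Connected) (hacyc : G.IsAcyclic)
    (hpred : IsPred G o pred) {v u : V} (hv : v ≠ o)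
    (h : G.Adj u v) (hd : G.dist o u + 1 = G.dist o v) : u = pred v :=
  back_unique hconn hacyc h hd (hpred v hv).1.symm (hpred v hv).2

lemma filter_back (hconn : G.Connected) (hacyc : G.IsAcyclic)
    (hpred : IsPred G o pred) {v : V} (hv : v ≠ o) :
    (G.neighborFinset v).filter (fun u => ¬ G.dist o u = G.dist o v + 1) = {pred v} := by
  ext u
  simp only [Finset.mem_filter, mem_neighborFinset, Finset.mem_singleton]
  constructor
  · rintro ⟨hadj, hne⟩
    rcases adj_dist_cases hconn hacyc (o := o) hadj.symm with hc | hc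
    · exact eq_pred hconn hacyc hpred hv hadj.symm hc
    · omega
  · rintro rfl
    obtain ⟨hadj, hd⟩ := hpred v hv
    exact ⟨hadj, by omega⟩

lemma card_succs (hconn : G.Connected) (hacyc : G.IsAcyclic)
    (hpred : IsPred G o pred) {q : ℕ} (hreg : G.IsRegularOfDegree (q + 1))
    {v : V} (hv : v ≠ o) : (succs G o v).card = q := by
  have h1 := Finset.card_filter_add_card_filter_not
    (s := G.neighborFinset v) (p := fun u => G.dist o u = G.dist o v + 1)
  rw [filter_back hconn hacyc hpred hv] at h1
  have h2 : (G.neighborFinset v).card = q + 1 := by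
    rw [card_neighborFinset_eq_degree]; exact hreg v
  simp only [Finset.card_singleton] at h1
  rw [h2] at h1
  simpa [succs] using by omega

lemma sum_nbhd_split (hconn : G.Connected) (hacyc : G.IsAcyclic)
    (hpred : IsPred G o pred) {v : V} (hv : v ≠ o) (f : V → ℂ) :
    ∑ u ∈ G.neighborFinset v, f u = (∑ u ∈ succs G o v, f u) + f (pred v) := by
  rw [← Finset.sum_filter_add_sum_filter_not (G.neighborFinset v)
    (fun u => G.dist o u = G.dist o v + 1) f,
    filter_back hconn hacyc hpred hv, Finset.sum_singleton]
  rfl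

end Pred

section Sector

variable [G.LocallyFinite] {o y : V}

omit [G.LocallyFinite] in
lemma mem_sector_iff {x : V} : x ∈ sector G o y ↔ G.dist o x = G.dist o y + G.dist y x :=
  Iff.rfl

omit [G.LocallyFinite] in
lemma sector_self : y ∈ sector G o y := by
  simp [mem_sector_iff, SimpleGraph.dist_self]

omit [G.LocallyFinite] in
lemma mem_sector_level_zero (hconn : G.Connected) {x : V}
    (hx : x ∈ sector G o y) (hd : G.dist o x = G.dist o y) : x = y := by
  rw [mem_sector_iff] at hx
  have : G.dist y x = 0 := by omega
  exact ((hconn.dist_eq_zero_iff).mp this).symm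

omit [G.LocallyFinite] in
lemma sector_fwd (hconn : G.Connected) {v u : V} (hv : v ∈ sector G o y)
    (h : G.Adj v u) (hd : G.dist o u = G.dist o v + 1) : u ∈ sector G o y := by
  rw [mem_sector_iff] at hv ⊢
  have t1 : G.dist y u ≤ G.dist y v + 1 := by
    have := hconn.dist_triangle (u := y) (v := v) (w := u)
    rwa [SimpleGraph.dist_eq_one_iff_adj.mpr h] at this
  have t2 : G.dist o u ≤ G.dist o y + G.dist y u := hconn.dist_triangle
  omega

omit [G.LocallyFinite] in
lemma sector_back (hconn : G.Connected) (hacyc : G.IsAcyclic) {pred : V → V}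
    (hpred : IsPred G o pred) {x : V} {k : ℕ} (hx : x ∈ sector G o y)
    (hd : G.dist o x = G.dist o y + (k + 1)) :
    pred x ∈ sector G o y ∧ G.dist o (pred x) = G.dist o y + k ∧ G.Adj (pred x) x := by
  have hxo : x ≠ o := by
    intro h; subst h; rw [SimpleGraph.dist_self] at hd; omega
  obtain ⟨hadj, hdp⟩ := hpred x hxo
  rw [mem_sector_iff] at hx
  have hyx : G.dist y x = k + 1 := by omega
  have hxy : x ≠ y := by
    intro h; subst h; omega
  obtain ⟨r, hr⟩ := (hconn.preconnected y x).exists_walk_length_eq_dist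
  obtain ⟨u, hu, t, ht⟩ := SimpleGraph.Walk.exists_eq_cons_of_ne hxy r.reverse
  have htl : t.length = k := by
    have h0 := congrArg SimpleGraph.Walk.length ht
    rw [SimpleGraph.Walk.length_reverse, hr, hyx, SimpleGraph.Walk.length_cons] at h0
    omega
  have h1 : G.dist u y ≤ k := htl ▸ SimpleGraph.dist_le t
  have h2 : G.dist y u ≤ k := by rwa [SimpleGraph.dist_comm]
  have h3 : G.dist o u ≤ G.dist o y + G.dist y u := hconn.dist_triangle
  have h4 : G.dist o x ≤ G.dist o u + 1 := by
    have := hconn.dist_triangle (u := o) (v := u) (w := x)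
    rwa [SimpleGraph.dist_eq_one_iff_adj.mpr hu.symm] at this
  have hdu : G.dist o u = G.dist o y + k := by omega
  have hupred : u = pred x :=
    eq_pred hconn hacyc hpred hxo hu.symm (by omega)
  subst hupred
  refine ⟨?_, hdu, hadj.symm⟩
  rw [mem_sector_iff]
  omega

end Sector

/-- Sphere of radius `dist o y + k` inside the sector `T_y`, as a finset. -/
noncomputable def sphF (G : SimpleGraph V) [G.LocallyFinite] (o y : V) : ℕ → Finset V
  | 0 => {y}
  | (k+1) => (sphF G o y k).biUnion (fun v => succs G o v)

section Sph

variable [G.LocallyFinite] {o y : V} {pred : V → V}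

lemma mem_succs_iff {v u : V} :
    u ∈ succs G o v ↔ G.Adj v u ∧ G.dist o u = G.dist o v + 1 := by
  simp [succs, mem_neighborFinset]

lemma mem_sphF (hconn : G.Connected) (hacyc : G.IsAcyclic)
    (hpred : IsPred G o pred) (hy : y ≠ o) :
    ∀ k x, x ∈ sphF G o y k ↔ (x ∈ sector G o y ∧ G.dist o x = G.dist o y + k) := by
  intro k
  induction k with
  | zero =>
    intro x
    simp only [sphF, Finset.mem_singleton]
    constructor
    · rintro rfl
      exact ⟨sector_self, by omega⟩
    · rintro ⟨h1, h2⟩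
      exact mem_sector_level_zero hconn h1 (by omega)
  | succ k ih =>
    intro x
    simp only [sphF, Finset.mem_biUnion]
    constructor
    · rintro ⟨v, hv, hx⟩
      obtain ⟨hvs, hvd⟩ := (ih v).mp hv
      obtain ⟨hadj, hd⟩ := mem_succs_iff.mp hx
      exact ⟨sector_fwd hconn hvs hadj hd, by omega⟩
    · rintro ⟨h1, h2⟩
      obtain ⟨hps, hpd, hpadj⟩ := sector_back hconn hacyc hpred h1 h2
      refine ⟨pred x, (ih (pred x)).mpr ⟨hps, hpd⟩, mem_succs_iff.mpr ⟨hpadj, by omega⟩⟩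

lemma sphF_ne_o (hconn : G.Connected) (hacyc : G.IsAcyclic)
    (hpred : IsPred G o pred) (hy : y ≠ o) {k : ℕ} {x : V}
    (hx : x ∈ sphF G o y k) : x ≠ o := by
  obtain ⟨-, hd⟩ := (mem_sphF hconn hacyc hpred hy k x).mp hx
  have hDpos : G.dist o y ≠ 0 := fun h => hy ((hconn.dist_eq_zero_iff).mp h).symm
  intro h
  subst h
  rw [SimpleGraph.dist_self] at hd
  omega

lemma succs_disjoint (hconn : G.Connected) (hacyc : G.IsAcyclic)
    {v1 v2 : V} (hd : G.dist o v1 = G.dist o v2) (hne : v1 ≠ v2) :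
    Disjoint (succs G o v1) (succs G o v2) := by
  rw [Finset.disjoint_left]
  intro u h1 h2
  obtain ⟨ha1, hd1⟩ := mem_succs_iff.mp h1
  obtain ⟨ha2, hd2⟩ := mem_succs_iff.mp h2
  exact hne (back_unique hconn hacyc (o := o) ha1 (by omega) ha2 (by omega))

lemma sum_sphF_succ (hconn : G.Connected) (hacyc : G.IsAcyclic)
    (hpred : IsPred G o pred) (hy : y ≠ o) (k : ℕ) (g : V → ℂ) :
    ∑ x ∈ sphF G o y (k+1), g x = ∑ v ∈ sphF G o y k, ∑ u ∈ succs G o v, g u := by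
  show ∑ x ∈ (sphF G o y k).biUnion (fun v => succs G o v), g x = _
  refine Finset.sum_biUnion ?_
  intro v1 h1 v2 h2 hne
  obtain ⟨-, hd1⟩ := (mem_sphF hconn hacyc hpred hy k v1).mp h1
  obtain ⟨-, hd2⟩ := (mem_sphF hconn hacyc hpred hy k v2).mp h2
  exact succs_disjoint hconn hacyc (by omega) hne

lemma card_sphF (hconn : G.Connected) (hacyc : G.IsAcyclic)
    (hpred : IsPred G o pred) (hy : y ≠ o) {q : ℕ}
    (hreg : G.IsRegularOfDegree (q + 1)) :
    ∀ k, (sphF G o y k).card = q ^ k := by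
  intro k
  induction k with
  | zero => simp [sphF]
  | succ k ih =>
    show ((sphF G o y k).biUnion (fun v => succs G o v)).card = _
    rw [Finset.card_biUnion]
    · rw [Finset.sum_congr rfl (fun v hv => card_succs hconn hacyc hpred hreg
        (sphF_ne_o hconn hacyc hpred hy hv))]
      rw [Finset.sum_const, ih, smul_eq_mul]
      ring
    · intro v1 h1 v2 h2 hne
      obtain ⟨-, hd1⟩ := (mem_sphF hconn hacyc hpred hy k v1).mp h1
      obtain ⟨-, hd2⟩ := (mem_sphF hconn hacyc hpred hy k v2).mp h2
      exact succs_disjoint hconn hacyc (by omega) hne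

end Sph

/-- Partial geometric sums over ℂ. -/
noncomputable def aC (q : ℕ) (k : ℕ) : ℂ := ∑ j ∈ Finset.range k, (q : ℂ) ^ j

lemma aC_cast (q m : ℕ) :
    ((∑ j ∈ Finset.range m, (q : ℝ) ^ j : ℝ) : ℂ) = aC q m := by
  unfold aC
  push_cast
  rfl

lemma aC_rec (q k : ℕ) : aC q (k + 2) = ((q : ℂ) + 1) * aC q (k + 1) - q * aC q k := by
  simp only [aC, Finset.sum_range_succ]
  ring

end TreeAux

open TreeBergman in
/-- propagation of a harmonic function on a sector, and its converse
for radial functions. -/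
theorem statement1
    {V : Type*} (G : SimpleGraph V) [G.LocallyFinite] (q : ℕ) (hq : 2 ≤ q)
    (hconn : G.Connected) (hacyc : G.IsAcyclic)
    (hreg : G.IsRegularOfDegree (q + 1))
    (o : V) (pred : V → V) (hpred : IsPred G o pred)
    (y : V) (hy : y ≠ o) (f : V → ℂ) :
    ((∀ v ∈ sector G o y, HarmonicAt G q f v) →
      ∀ n : ℕ, G.dist o y ≤ n →
        ∑' x : {x : V // x ∈ sector G o y ∧ G.dist o x = n}, f x
          = ((∑ j ∈ Finset.range (n - G.dist o y + 1), (q : ℝ) ^ j : ℝ) : ℂ) * f y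
            - ((∑ j ∈ Finset.range (n - G.dist o y), (q : ℝ) ^ j : ℝ) : ℂ) * f (pred y))
    ∧
    ((∀ x₁ x₂, x₁ ∈ sector G o y → x₂ ∈ sector G o y →
        G.dist o x₁ = G.dist o x₂ → f x₁ = f x₂) →
      (∀ n : ℕ, G.dist o y ≤ n →
        ∑' x : {x : V // x ∈ sector G o y ∧ G.dist o x = n}, f x
          = ((∑ j ∈ Finset.range (n - G.dist o y + 1), (q : ℝ) ^ j : ℝ) : ℂ) * f y
            - ((∑ j ∈ Finset.range (n - G.dist o y), (q : ℝ) ^ j : ℝ) : ℂ) * f (pred y)) →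
      ∀ v ∈ sector G o y, HarmonicAt G q f v) := by
  classical
  have hDpos : 1 ≤ G.dist o y :=
    Nat.pos_of_ne_zero (fun h => hy ((hconn.dist_eq_zero_iff).mp h).symm)
  set D := G.dist o y with hD
  -- tsum over a sphere in the sector is a finite sum over sphF
  have key : ∀ (n : ℕ), D ≤ n →
      ∑' x : {x : V // x ∈ sector G o y ∧ G.dist o x = n}, f x
        = ∑ x ∈ TreeAux.sphF G o y (n - D), f x := by
    intro n hn
    have he : ∀ x : V, (x ∈ sector G o y ∧ G.dist o x = n)
        ↔ x ∈ TreeAux.sphF G o y (n - D) := by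
      intro x
      rw [TreeAux.mem_sphF hconn hacyc hpred hy]
      constructor
      · rintro ⟨h1, h2⟩; exact ⟨h1, by omega⟩
      · rintro ⟨h1, h2⟩; exact ⟨h1, by omega⟩
    have h1 : ∑' x : {x : V // x ∈ sector G o y ∧ G.dist o x = n}, f ↑x
        = ∑' x : {x : V // x ∈ TreeAux.sphF G o y (n - D)}, f ↑x :=
      (Equiv.subtypeEquivRight he).tsum_eq
        (fun x : {x : V // x ∈ TreeAux.sphF G o y (n - D)} => f ↑x)
    rw [h1, Finset.tsum_subtype]
  -- abbreviation for sphere sums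
  set S : ℕ → ℂ := fun k => ∑ x ∈ TreeAux.sphF G o y k, f x with hS
  have hS0 : S 0 = f y := by simp [hS, TreeAux.sphF]
  -- every sphF member is in the sector at the right level
  have hmem : ∀ k x, x ∈ TreeAux.sphF G o y k →
      x ∈ sector G o y ∧ G.dist o x = D + k := by
    intro k x hx
    exact (TreeAux.mem_sphF hconn hacyc hpred hy k x).mp hx
  have hcard : ∀ {v : V} {k : ℕ}, v ∈ TreeAux.sphF G o y k → (succs G o v).card = q :=
    fun hv => TreeAux.card_succs hconn hacyc hpred hreg
      (TreeAux.sphF_ne_o hconn hacyc hpred hy hv)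
  -- the backward sum identity
  have rec2 : ∀ k, (∑ v ∈ TreeAux.sphF G o y (k+1), f (pred v)) = (q : ℂ) * S k := by
    intro k
    rw [TreeAux.sum_sphF_succ hconn hacyc hpred hy k (fun v => f (pred v))]
    have : ∀ w ∈ TreeAux.sphF G o y k,
        (∑ u ∈ succs G o w, f (pred u)) = (q : ℂ) * f w := by
      intro w hw
      have hcw := hcard hw
      have : ∀ u ∈ succs G o w, f (pred u) = f w := by
        intro u hu
        obtain ⟨hadj, hd⟩ := TreeAux.mem_succs_iff.mp hu
        have huo : u ≠ o := by
          intro h; subst h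
          rw [SimpleGraph.dist_self] at hd
          omega
        have := TreeAux.eq_pred hconn hacyc hpred huo hadj (by omega)
        rw [← this]
      rw [Finset.sum_congr rfl this, Finset.sum_const, hcw, nsmul_eq_mul]
    rw [Finset.sum_congr rfl this, ← Finset.mul_sum]
  -- recurrence from harmonicity
  have rec1 : (∀ v ∈ sector G o y, HarmonicAt G q f v) → ∀ k,
      S (k+1) = ((q : ℂ) + 1) * S k - ∑ v ∈ TreeAux.sphF G o y k, f (pred v) := by
    intro hharm k
    show ∑ x ∈ TreeAux.sphF G o y (k+1), f x = _
    rw [TreeAux.sum_sphF_succ hconn hacyc hpred hy k f]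
    have hstep : ∀ v ∈ TreeAux.sphF G o y k,
        (∑ u ∈ succs G o v, f u) = ((q:ℂ)+1) * f v - f (pred v) := by
      intro v hv
      have hvo := TreeAux.sphF_ne_o hconn hacyc hpred hy hv
      have h2 := hharm v (hmem k v hv).1
      rw [HarmonicAt, TreeAux.sum_nbhd_split hconn hacyc hpred hvo f] at h2
      linear_combination -h2
    rw [Finset.sum_congr rfl hstep, Finset.sum_sub_distrib, ← Finset.mul_sum]
  -- closed form of the sphere sums for harmonic f
  have Sval : (∀ v ∈ sector G o y, HarmonicAt G q f v) →
      ∀ k, S k = TreeAux.aC q (k+1) * f y - TreeAux.aC q k * f (pred y) := by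
    intro hharm
    have base1 : S 1 = ((q:ℂ)+1) * f y - f (pred y) := by
      have h := rec1 hharm 0
      rw [hS0] at h
      simpa [TreeAux.sphF] using h
    have main : ∀ k, (S k = TreeAux.aC q (k+1) * f y - TreeAux.aC q k * f (pred y)) ∧
        (S (k+1) = TreeAux.aC q (k+2) * f y - TreeAux.aC q (k+1) * f (pred y)) := by
      intro k
      induction k with
      | zero =>
        constructor
        all_goals
          have ha0 : TreeAux.aC q 0 = 0 := by simp [TreeAux.aC]
          have ha1 : TreeAux.aC q 1 = 1 := by simp [TreeAux.aC]
          have ha2 : TreeAux.aC q 2 = 1 + q := by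
            simp [TreeAux.aC, Finset.sum_range_succ]
        · rw [hS0, ha1, ha0]; ring
        · rw [base1, ha2, ha1]; ring
      | succ k ih =>
        refine ⟨ih.2, ?_⟩
        have hrec : S (k+2) = ((q:ℂ)+1) * S (k+1) - (q:ℂ) * S k := by
          rw [rec1 hharm (k+1), rec2 k]
        rw [hrec, ih.1, ih.2]
        linear_combination (-(f y)) * TreeAux.aC_rec q (k+1) + f (pred y) * TreeAux.aC_rec q k
    exact fun k => (main k).1
  constructor
  · intro hharm n hn
    rw [key n hn, TreeAux.aC_cast, TreeAux.aC_cast]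
    exact Sval hharm (n - D)
  · intro hrad hid v hv
    have hSv : ∀ k, S k = TreeAux.aC q (k+1) * f y - TreeAux.aC q k * f (pred y) := by
      intro k
      have h0 := hid (D + k) (by omega)
      rw [key (D + k) (by omega)] at h0
      have hx : D + k - D = k := by omega
      rw [hx] at h0
      rw [TreeAux.aC_cast, TreeAux.aC_cast] at h0
      exact h0
    have hvd0 : G.dist o v = D + G.dist y v := hv
    obtain ⟨k, hvd⟩ : ∃ k, G.dist o v = D + k := ⟨G.dist y v, hvd0⟩
    have hvk : v ∈ TreeAux.sphF G o y k :=
      (TreeAux.mem_sphF hconn hacyc hpred hy k v).mpr ⟨hv, hvd⟩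
    have hvo : v ≠ o := TreeAux.sphF_ne_o hconn hacyc hpred hy hvk
    rw [HarmonicAt, TreeAux.sum_nbhd_split hconn hacyc hpred hvo f]
    have hconst : ∀ (j : ℕ) (w x : V), w ∈ TreeAux.sphF G o y j →
        x ∈ TreeAux.sphF G o y j → f x = f w := by
      intro j w x hw hx
      obtain ⟨hw1, hw2⟩ := hmem j w hw
      obtain ⟨hx1, hx2⟩ := hmem j x hx
      exact hrad x w hx1 hw1 (by omega)
    have hSc : ∀ (j : ℕ) (w : V), w ∈ TreeAux.sphF G o y j → S j = (q:ℂ)^j * f w := by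
      intro j w hw
      show ∑ x ∈ TreeAux.sphF G o y j, f x = _
      rw [Finset.sum_congr rfl (fun x hx => hconst j w x hw hx), Finset.sum_const,
        TreeAux.card_sphF hconn hacyc hpred hy hreg j, nsmul_eq_mul]
      push_cast
      ring
    obtain ⟨u0, hu0⟩ : (succs G o v).Nonempty := by
      rw [← Finset.card_pos, hcard hvk]; omega
    have hu0k : u0 ∈ TreeAux.sphF G o y (k+1) := by
      obtain ⟨hadj, hd⟩ := TreeAux.mem_succs_iff.mp hu0
      exact (TreeAux.mem_sphF hconn hacyc hpred hy (k+1) u0).mpr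
        ⟨TreeAux.sector_fwd hconn hv hadj hd, by omega⟩
    have hsumsucc : (∑ u ∈ succs G o v, f u) = (q:ℂ) * f u0 := by
      have hc : ∀ u ∈ succs G o v, f u = f u0 := by
        intro u hu
        obtain ⟨hadj, hd⟩ := TreeAux.mem_succs_iff.mp hu
        exact hconst (k+1) u0 u hu0k
          ((TreeAux.mem_sphF hconn hacyc hpred hy (k+1) u).mpr
            ⟨TreeAux.sector_fwd hconn hv hadj hd, by omega⟩)
      rw [Finset.sum_congr rfl hc, Finset.sum_const, hcard hvk, nsmul_eq_mul]
    rw [hsumsucc]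
    rcases Nat.eq_zero_or_pos k with hk0 | hkpos
    · subst hk0
      have hvy : v = y := by
        have h := hvk; simpa [TreeAux.sphF] using h
      have e1 := hSv 1
      rw [hSc 1 u0 hu0k] at e1
      rw [hvy]
      simp only [TreeAux.aC, Finset.sum_range_succ, Finset.sum_range_zero,
        pow_one, pow_zero] at e1
      linear_combination -e1
    · obtain ⟨j, rfl⟩ : ∃ j, k = j + 1 := ⟨k - 1, by omega⟩
      obtain ⟨hps, hpd, -⟩ := TreeAux.sector_back hconn hacyc hpred (k := j) hv (by omega)
      have hpvk : pred v ∈ TreeAux.sphF G o y j :=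
        (TreeAux.mem_sphF hconn hacyc hpred hy j (pred v)).mpr ⟨hps, hpd⟩
      have e0 := hSv j; rw [hSc j (pred v) hpvk] at e0
      have e1 := hSv (j+1); rw [hSc (j+1) v hvk] at e1
      have e2 := hSv (j+2); rw [hSc (j+2) u0 hu0k] at e2
      have hqne : ((q:ℂ))^(j+1) ≠ 0 :=
        pow_ne_zero _ (Nat.cast_ne_zero.mpr (by omega))
      apply mul_left_cancel₀ hqne
      linear_combination ((q:ℂ)+1) * e1 - e2 - (q:ℂ) * e0
        - f y * TreeAux.aC_rec q (j+1) + f (pred y) * TreeAux.aC_rec q j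
end

section
/- Let n ∈ ℕ and let g : X → ℂ be harmonic on the ball B(o,n). Then the harmonic extension g_n^H is harmonic on all of X, coincides with g on B(o,n+1), and for every y ∈ S(o,n+1) the restriction of g_n^H to the sector T_y is radial (its value at x ∈ T_y depends only on |x|). -/
open scoped BigOperators
open scoped Classical

section S2Aux

open SimpleGraph TreeBergman

variable {V : Type*}

/-- On a shortest walk, the distance splits at any support vertex. -/
lemma aux_dist_split (G : SimpleGraph V) (hconn : G.Connected) {u v x : V}
    (p : G.Walk u v) (hp : p.length = G.dist u v) (hx : x ∈ p.support) :
    G.dist u x + G.dist x v = G.dist u v := by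
  have h1 : G.dist u x ≤ (p.takeUntil x hx).length := G.dist_le _
  have h2 : G.dist x v ≤ (p.dropUntil x hx).length := G.dist_le _
  have h3 : (p.takeUntil x hx).length + (p.dropUntil x hx).length = p.length := by
    rw [← SimpleGraph.Walk.length_append, SimpleGraph.Walk.take_spec]
  have h4 : G.dist u v ≤ G.dist u x + G.dist x v := hconn.dist_triangle
  omega

lemma aux_isPath_concat {G : SimpleGraph V} {u v w : V} {p : G.Walk u v}
    (hp : p.IsPath) (h : G.Adj v w) (hw : w ∉ p.support) : (p.concat h).IsPath := by
  rw [← SimpleGraph.Walk.isPath_reverse_iff, SimpleGraph.Walk.reverse_concat]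
  exact hp.reverse.cons (by simpa using hw)

/-- In a tree, a neighbor that is not farther from the root is the predecessor. -/
lemma aux_adj_down {G : SimpleGraph V} (hconn : G.Connected) (hacyc : G.IsAcyclic)
    {o : V} {pred : V → V}
    (hpred : ∀ v, v ≠ o → G.Adj v (pred v) ∧ G.dist o (pred v) + 1 = G.dist o v)
    {v u : V} (h : G.Adj v u) (hle : G.dist o u ≤ G.dist o v) : u = pred v := by
  have hvo : v ≠ o := by
    rintro rfl
    have h0 : G.dist v u = 0 := by rw [SimpleGraph.dist_self] at hle; omega
    exact h.ne (hconn.dist_eq_zero_iff.mp h0)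
  obtain ⟨hadj, hd⟩ := hpred v hvo
  obtain ⟨P, hPp, hPl⟩ := hconn.exists_path_of_dist o u
  obtain ⟨Q, hQp, hQl⟩ := hconn.exists_path_of_dist o (pred v)
  have hvP : v ∉ P.support := by
    intro hs
    have hsplit := aux_dist_split G hconn P hPl hs
    have hz : G.dist v u = 0 := by omega
    exact h.ne (hconn.dist_eq_zero_iff.mp hz)
  have hvQ : v ∉ Q.support := by
    intro hs
    have hsplit := aux_dist_split G hconn Q hQl hs
    omega
  have W1 : (P.concat h.symm).IsPath := aux_isPath_concat hPp h.symm hvP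
  have W2 : (Q.concat hadj.symm).IsPath := aux_isPath_concat hQp hadj.symm hvQ
  have heq : P.concat h.symm = Q.concat hadj.symm :=
    congrArg Subtype.val (hacyc.path_unique ⟨P.concat h.symm, W1⟩ ⟨Q.concat hadj.symm, W2⟩)
  obtain ⟨hv, -⟩ := SimpleGraph.Walk.concat_inj heq
  exact hv

/-- Any neighbor other than the predecessor is a successor. -/
lemma aux_adj_up {G : SimpleGraph V} (hconn : G.Connected) (hacyc : G.IsAcyclic)
    {o : V} {pred : V → V}
    (hpred : ∀ v, v ≠ o → G.Adj v (pred v) ∧ G.dist o (pred v) + 1 = G.dist o v)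
    {v u : V} (h : G.Adj v u) (hne : u ≠ pred v) :
    G.dist o u = G.dist o v + 1 ∧ pred u = v := by
  have h1 : ¬ G.dist o u ≤ G.dist o v := fun hle => hne (aux_adj_down hconn hacyc hpred h hle)
  have h2 : G.dist v u = 1 := SimpleGraph.dist_eq_one_iff_adj.mpr h
  have h3 : G.dist o u ≤ G.dist o v + G.dist v u := hconn.dist_triangle
  have hd : G.dist o u = G.dist o v + 1 := by omega
  exact ⟨hd, (aux_adj_down hconn hacyc hpred h.symm (by omega)).symm⟩

/-- For x in the sector of y, the iterated predecessor reaches y. -/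
lemma aux_sector_iter {G : SimpleGraph V} (hconn : G.Connected) (hacyc : G.IsAcyclic)
    {o : V} {pred : V → V}
    (hpred : ∀ v, v ≠ o → G.Adj v (pred v) ∧ G.dist o (pred v) + 1 = G.dist o v)
    (y : V) : ∀ k x, G.dist o x = G.dist o y + k → G.dist y x = k → pred^[k] x = y := by
  intro k
  induction k with
  | zero =>
    intro x _ h2
    simpa using (hconn.dist_eq_zero_iff.mp h2).symm
  | succ k ih =>
    intro x h1 h2
    have hxy : x ≠ y := by
      rintro rfl; rw [SimpleGraph.dist_self] at h2; omega
    have hxo : x ≠ o := by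
      rintro rfl; rw [SimpleGraph.dist_self] at h1; omega
    obtain ⟨R, hRp, hRl⟩ := hconn.exists_path_of_dist x y
    rw [SimpleGraph.dist_comm] at hRl
    obtain ⟨w, hadj, R', rfl⟩ := SimpleGraph.Walk.exists_eq_cons_of_ne hxy R
    have hR'l : R'.length = k := by
      have := SimpleGraph.Walk.length_cons hadj R'
      omega
    have hwy : G.dist w y ≤ k := hR'l ▸ G.dist_le R'
    have hyw : G.dist y w ≤ k := by rwa [SimpleGraph.dist_comm]
    have how : G.dist o w ≤ G.dist o y + G.dist y w := hconn.dist_triangle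
    have hw : w = pred x := aux_adj_down hconn hacyc hpred hadj (by omega)
    obtain ⟨-, hdp⟩ := hpred x hxo
    have hd1 : G.dist o (pred x) = G.dist o y + k := by omega
    have hd2 : G.dist y (pred x) = k := by
      have hle : G.dist y (pred x) ≤ k := hw ▸ hyw
      have hge : G.dist o (pred x) ≤ G.dist o y + G.dist y (pred x) := hconn.dist_triangle
      omega
    rw [Function.iterate_succ_apply]
    exact ih (pred x) hd1 hd2


lemma aux_aseq_zero (q : ℕ) : aseq q 0 = 1 := by simp [aseq]

lemma aux_aseq_succ (q k : ℕ) : aseq q (k + 1) = aseq q k + ((q : ℝ)⁻¹) ^ (k + 1) :=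
  Finset.sum_range_succ _ _

lemma aux_q_aseq_one (q : ℕ) (hq : 1 ≤ q) : (q : ℝ) * aseq q 1 = (q : ℝ) + 1 := by
  have hq0 : (q : ℝ) ≠ 0 := Nat.cast_ne_zero.mpr (by omega)
  rw [aux_aseq_succ, aux_aseq_zero]
  field_simp
  have hqq : (q : ℝ) * (q : ℝ)⁻¹ = 1 := mul_inv_cancel₀ hq0
  linear_combination hqq

lemma aux_aseq_id (q : ℕ) (hq : 1 ≤ q) (k : ℕ) :
    (q : ℝ) * aseq q (k + 2) + aseq q k = ((q : ℝ) + 1) * aseq q (k + 1) := by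
  have hq0 : (q : ℝ) ≠ 0 := Nat.cast_ne_zero.mpr (by omega)
  rw [aux_aseq_succ q (k + 1), aux_aseq_succ q k]
  field_simp
  have hqq : (q : ℝ) * (q : ℝ)⁻¹ = 1 := mul_inv_cancel₀ hq0
  linear_combination ((q : ℝ)⁻¹ * (q : ℝ)⁻¹ ^ k) * hqq

lemma aux_hext_formula (G : SimpleGraph V) (o : V) (pred : V → V) (q : ℕ)
    (g : V → ℂ) (n : ℕ) {x : V} {ℓ : ℕ} (hx : G.dist o x = n + 1 + ℓ) :
    hext G o pred q g n x
      = ((aseq q ℓ : ℝ) : ℂ) * g (pred^[ℓ] x)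
        - ((aseq q ℓ - 1 : ℝ) : ℂ) * g (pred^[ℓ + 1] x) := by
  have h1 : ¬ G.dist o x ≤ n := by omega
  have e1 : G.dist o x - n - 1 = ℓ := by omega
  have e2 : G.dist o x - n = ℓ + 1 := by omega
  rw [hext, if_neg h1, e1, e2]

lemma aux_hext_ball (G : SimpleGraph V) (o : V) (pred : V → V) (q : ℕ)
    (g : V → ℂ) (n : ℕ) {x : V} (hx : G.dist o x ≤ n + 1) :
    hext G o pred q g n x = g x := by
  by_cases h : G.dist o x ≤ n
  · rw [hext, if_pos h]
  · have hx0 : G.dist o x = n + 1 + 0 := by omega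
    rw [aux_hext_formula G o pred q g n hx0, aux_aseq_zero]
    simp

end S2Aux

open TreeBergman in
/-- the harmonic extension g_n^H of a function harmonic on B(o,n) is
harmonic on X, coincides with g on B(o,n+1), and is radial on each sector T_y
with y ∈ S(o,n+1). -/
theorem statement2
    {V : Type*} (G : SimpleGraph V) [G.LocallyFinite] (q : ℕ) (hq : 2 ≤ q)
    (hconn : G.Connected) (hacyc : G.IsAcyclic)
    (hreg : G.IsRegularOfDegree (q + 1))
    (o : V) (pred : V → V) (hpred : IsPred G o pred)
    (n : ℕ) (g : V → ℂ)
    (hg : ∀ v : V, G.dist o v ≤ n → HarmonicAt G q g v) :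
    Harmonic G q (hext G o pred q g n)
    ∧ (∀ x : V, G.dist o x ≤ n + 1 → hext G o pred q g n x = g x)
    ∧ (∀ y : V, G.dist o y = n + 1 →
        ∀ x₁ x₂, x₁ ∈ sector G o y → x₂ ∈ sector G o y →
          G.dist o x₁ = G.dist o x₂ →
          hext G o pred q g n x₁ = hext G o pred q g n x₂) := by
  classical
  have hpred' : ∀ v, v ≠ o → G.Adj v (pred v) ∧ G.dist o (pred v) + 1 = G.dist o v := hpred
  have hq1 : 1 ≤ q := by omega
  -- Part 2 first
  have hball : ∀ x : V, G.dist o x ≤ n + 1 → hext G o pred q g n x = g x :=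
    fun x hx => aux_hext_ball G o pred q g n hx
  refine ⟨?_, hball, ?_⟩
  · -- harmonicity
    intro v
    show ((q : ℂ) + 1) * hext G o pred q g n v = ∑ u ∈ G.neighborFinset v, hext G o pred q g n u
    by_cases hv : G.dist o v ≤ n
    · rw [hball v (by omega), Finset.sum_congr rfl (fun u hu => by
        have hadj : G.Adj v u := (SimpleGraph.mem_neighborFinset G v u).mp hu
        have h2 : G.dist v u = 1 := SimpleGraph.dist_eq_one_iff_adj.mpr hadj
        have h3 : G.dist o u ≤ G.dist o v + G.dist v u := hconn.dist_triangle
        exact hball u (by omega))]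
      exact hg v hv
    · obtain ⟨ℓ, hℓ⟩ : ∃ ℓ, G.dist o v = n + 1 + ℓ := ⟨G.dist o v - n - 1, by omega⟩
      have hvo : v ≠ o := by
        rintro rfl; rw [SimpleGraph.dist_self] at hℓ; omega
      obtain ⟨hwadj, hwd⟩ := hpred' v hvo
      have hwmem : pred v ∈ G.neighborFinset v := (SimpleGraph.mem_neighborFinset G v _).mpr hwadj
      have hcard : (G.neighborFinset v).card = q + 1 := hreg v
      have hsucc : ∀ u ∈ (G.neighborFinset v).erase (pred v),
          hext G o pred q g n u
            = ((aseq q (ℓ + 1) : ℝ) : ℂ) * g (pred^[ℓ] v)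
              - ((aseq q (ℓ + 1) - 1 : ℝ) : ℂ) * g (pred^[ℓ + 1] v) := by
        intro u hu
        have hne : u ≠ pred v := (Finset.mem_erase.mp hu).1
        have hadj : G.Adj v u := (SimpleGraph.mem_neighborFinset G v u).mp (Finset.mem_erase.mp hu).2
        obtain ⟨hdu, hpu⟩ := aux_adj_up hconn hacyc hpred' hadj hne
        rw [aux_hext_formula G o pred q g n (x := u) (ℓ := ℓ + 1) (by omega),
          Function.iterate_succ_apply, hpu, Function.iterate_succ_apply, hpu]
      rw [← Finset.sum_erase_add _ _ hwmem, Finset.sum_congr rfl hsucc, Finset.sum_const,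
        Finset.card_erase_of_mem hwmem, hcard, Nat.add_sub_cancel, nsmul_eq_mul,
        aux_hext_formula G o pred q g n (x := v) hℓ]
      rcases Nat.eq_zero_or_pos ℓ with h0 | hpos
      · subst h0
        have hfw : hext G o pred q g n (pred v) = g (pred v) := hball _ (by omega)
        rw [hfw]
        have hid : (q : ℂ) * ((aseq q 1 : ℝ) : ℂ) = (q : ℂ) + 1 := by
          exact_mod_cast congrArg (fun t : ℝ => (t : ℂ)) (aux_q_aseq_one q hq1)
        rw [aux_aseq_zero]
        push_cast
        push_cast at hid
        simp only [Function.iterate_zero_apply, Function.iterate_one]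
        linear_combination (g (pred v) - g v) * hid
      · obtain ⟨k, rfl⟩ : ∃ k, ℓ = k + 1 := ⟨ℓ - 1, by omega⟩
        have hdw : G.dist o (pred v) = n + 1 + k := by omega
        rw [aux_hext_formula G o pred q g n (x := pred v) hdw,
          ← Function.iterate_succ_apply, ← Function.iterate_succ_apply]
        have hid : (q : ℂ) * ((aseq q (k + 2) : ℝ) : ℂ) + ((aseq q k : ℝ) : ℂ)
            = ((q : ℂ) + 1) * ((aseq q (k + 1) : ℝ) : ℂ) := by
          exact_mod_cast congrArg (fun t : ℝ => (t : ℂ)) (aux_aseq_id q hq1 k)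
        push_cast
        push_cast at hid
        linear_combination (g (pred^[k + 1 + 1] v) - g (pred^[k + 1] v)) * hid
  · -- radiality on sectors
    intro y hy x₁ x₂ hx₁ hx₂ hdist
    have key : ∀ x, x ∈ sector G o y →
        hext G o pred q g n x
          = ((aseq q (G.dist o x - (n + 1)) : ℝ) : ℂ) * g y
            - ((aseq q (G.dist o x - (n + 1)) - 1 : ℝ) : ℂ) * g (pred y) := by
      intro x hx
      have hsec : G.dist o x = G.dist o y + G.dist y x := hx
      have hk : G.dist o x = n + 1 + G.dist y x := by omega
      have hp : pred^[G.dist y x] x = y :=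
        aux_sector_iter hconn hacyc hpred' y (G.dist y x) x (by omega) rfl
      have ek : G.dist o x - (n + 1) = G.dist y x := by omega
      rw [aux_hext_formula G o pred q g n hk, hp, Function.iterate_succ_apply', hp, ek]
    rw [key x₁ hx₁, key x₂ hx₂, hdist]
end

section
/- For every reference measure σ on X, the measure metric space (X, d, σ) is nondoubling: for every constant C > 0 there exist a vertex v ∈ X and an integer n ≥ 1 such that σ(B(v,2n)) > C σ(B(v,n)). -/
open scoped BigOperators
open scoped Classical

namespace TreeBergman

variable {V : Type*}

open SimpleGraph in
lemma aux_unique_near {V : Type*} {G : SimpleGraph V} (hconn : G.Connected)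
    (hacyc : G.IsAcyclic) {o v u₁ u₂ : V} {m : ℕ} (hv : G.dist o v = m)
    (h1 : G.Adj v u₁) (h2 : G.Adj v u₂)
    (d1 : G.dist o u₁ ≤ m) (d2 : G.dist o u₂ ≤ m) : u₁ = u₂ := by
  classical
  obtain ⟨p₁, hp₁, hl₁⟩ := hconn.exists_path_of_dist u₁ o
  obtain ⟨p₂, hp₂, hl₂⟩ := hconn.exists_path_of_dist u₂ o
  have hL1 : p₁.length ≤ m := by rw [hl₁, SimpleGraph.dist_comm]; exact d1
  have hL2 : p₂.length ≤ m := by rw [hl₂, SimpleGraph.dist_comm]; exact d2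
  have hdvo : G.dist v o = m := by rw [SimpleGraph.dist_comm]; exact hv
  have hv1 : v ∉ p₁.support := by
    intro hmem
    have hsplit := congrArg Walk.length (p₁.take_spec hmem)
    rw [Walk.length_append] at hsplit
    have hdle : G.dist v o ≤ (p₁.dropUntil v hmem).length := SimpleGraph.dist_le _
    have htz : (p₁.takeUntil v hmem).length = 0 := by omega
    exact h1.ne (Walk.eq_of_length_eq_zero htz).symm
  have hv2 : v ∉ p₂.support := by
    intro hmem
    have hsplit := congrArg Walk.length (p₂.take_spec hmem)
    rw [Walk.length_append] at hsplit
    have hdle : G.dist v o ≤ (p₂.dropUntil v hmem).length := SimpleGraph.dist_le _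
    have htz : (p₂.takeUntil v hmem).length = 0 := by omega
    exact h2.ne (Walk.eq_of_length_eq_zero htz).symm
  have hr₁ : (Walk.cons h1 p₁).IsPath := hp₁.cons hv1
  have hr₂ : (Walk.cons h2 p₂).IsPath := hp₂.cons hv2
  have hpu := SimpleGraph.isAcyclic_iff_path_unique.mp hacyc
    (⟨Walk.cons h1 p₁, hr₁⟩ : G.Path v o) ⟨Walk.cons h2 p₂, hr₂⟩
  have heq : Walk.cons h1 p₁ = Walk.cons h2 p₂ := congrArg Subtype.val hpu
  have hs := congrArg Walk.support heq
  rw [Walk.support_cons, Walk.support_cons] at hs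
  have hsup : p₁.support = p₂.support := by simpa using hs
  have hcons : u₁ :: p₁.support.tail = u₂ :: p₂.support.tail := by
    rw [← Walk.support_eq_cons, ← Walk.support_eq_cons]; exact hsup
  exact (List.cons.inj hcons).1

open SimpleGraph in
lemma exists_dist_eq {V : Type*} (G : SimpleGraph V) [G.LocallyFinite] (q : ℕ)
    (hq : 2 ≤ q) (hconn : G.Connected) (hacyc : G.IsAcyclic)
    (hreg : G.IsRegularOfDegree (q + 1)) (o : V) :
    ∀ m : ℕ, ∃ v : V, G.dist o v = m := by
  intro m
  induction m with
  | zero => exact ⟨o, SimpleGraph.dist_self⟩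
  | succ m ih =>
    obtain ⟨v, hv⟩ := ih
    by_contra hcon
    push_neg at hcon
    have hall : ∀ u ∈ G.neighborFinset v, G.dist o u ≤ m := by
      intro u hu
      rw [SimpleGraph.mem_neighborFinset] at hu
      have htri : G.dist o u ≤ G.dist o v + G.dist v u := hconn.dist_triangle
      have hone : G.dist v u = 1 := SimpleGraph.dist_eq_one_iff_adj.mpr hu
      have hne := hcon u
      omega
    have hcard : (G.neighborFinset v).card ≤ 1 := by
      apply Finset.card_le_one.mpr
      intro a ha b hb
      exact TreeBergman.aux_unique_near hconn hacyc hv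
        ((SimpleGraph.mem_neighborFinset _ _ _).mp ha)
        ((SimpleGraph.mem_neighborFinset _ _ _).mp hb)
        (hall a ha) (hall b hb)
    have hdeg := hreg v
    rw [SimpleGraph.degree] at hdeg
    omega


end TreeBergman

open TreeBergman in
/-- for every reference measure σ the metric measure space (X,d,σ)
is nondoubling. -/
theorem statement3
    {V : Type*} (G : SimpleGraph V) [G.LocallyFinite] (q : ℕ) (hq : 2 ≤ q)
    (hconn : G.Connected) (hacyc : G.IsAcyclic)
    (hreg : G.IsRegularOfDegree (q + 1))
    (o : V) (w : ℕ → ℝ) (hpos : ∀ n, 0 < w n) (hdec : Antitone w)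
    (hfin : Summable fun x : V => w (G.dist o x)) :
    ∀ C : ℝ, 0 < C → ∃ (v : V) (n : ℕ), 1 ≤ n ∧
      C * ∑' x : {x : V // G.dist v x ≤ n}, w (G.dist o x)
        < ∑' x : {x : V // G.dist v x ≤ 2 * n}, w (G.dist o x) := by
  classical
  intro C hC
  set f : V → ℝ := fun x => w (G.dist o x) with hf
  have hfnn : ∀ x, 0 ≤ f x := fun x => (hpos _).le
  set T := ∑' x, f x with hT
  have hε : 0 < w 0 / C := div_pos (hpos 0) hC
  have hev : ∀ᶠ s in Filter.atTop, T - w 0 / C < ∑ x ∈ s, f x :=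
    hfin.hasSum.eventually (eventually_gt_nhds (by linarith))
  obtain ⟨s, hs⟩ := hev.exists
  have hcompl : Summable (fun x : ↑((↑s : Set V)ᶜ) => f ↑x) := hfin.subtype _
  have hins : Summable (fun x : ↑(↑s : Set V) => f ↑x) := hfin.subtype _
  have hsplit : ∑' (x : ↑(↑s : Set V)), f ↑x + ∑' (x : ↑((↑s : Set V)ᶜ)), f ↑x = T :=
    Summable.tsum_add_tsum_compl hins hcompl
  have hfsum : ∑' (x : ↑(↑s : Set V)), f ↑x = ∑ x ∈ s, f x := s.tsum_subtype f
  have htail : ∑' (x : ↑((↑s : Set V)ᶜ)), f ↑x < w 0 / C := by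
    rw [hfsum] at hsplit; linarith
  set n := (s.sup (G.dist o)) + 1 with hn
  obtain ⟨v, hvd⟩ := TreeBergman.exists_dist_eq G q hq hconn hacyc hreg o (2 * n)
  refine ⟨v, n, Nat.le_add_left 1 _, ?_⟩
  have hsub : ∀ x : V, G.dist v x ≤ n → x ∈ ((↑s : Set V)ᶜ) := by
    intro x hx
    simp only [Set.mem_compl_iff, Finset.mem_coe]
    intro hxs
    have h1 : G.dist o v ≤ G.dist o x + G.dist x v := hconn.dist_triangle
    have h2 : G.dist x v = G.dist v x := SimpleGraph.dist_comm
    have h3 : G.dist o x ≤ s.sup (G.dist o) := Finset.le_sup hxs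
    omega
  have hLHS : ∑' x : {x : V // G.dist v x ≤ n}, w (G.dist o ↑x)
      ≤ ∑' (x : ↑((↑s : Set V)ᶜ)), f ↑x := by
    apply Summable.tsum_le_tsum_of_inj (fun x : {x : V // G.dist v x ≤ n} => (⟨x.1, hsub x.1 x.2⟩ : ↑((↑s : Set V)ᶜ)))
    · intro a b hab
      exact Subtype.ext (congrArg (Subtype.val : ↑((↑s : Set V)ᶜ) → V) hab)
    · intro c _
      exact hfnn _
    · intro i
      exact le_rfl
    · exact hfin.subtype _
    · exact hcompl
  have hRHS : w 0 ≤ ∑' x : {x : V // G.dist v x ≤ 2 * n}, w (G.dist o ↑x) := by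
    have ho : G.dist v o ≤ 2 * n := by rw [SimpleGraph.dist_comm]; omega
    have hle := Summable.le_tsum (hfin.subtype _) (⟨o, ho⟩ : {x : V // G.dist v x ≤ 2 * n})
      (fun j _ => hfnn _)
    simpa [hf, SimpleGraph.dist_self] using hle
  have hmain : C * ∑' x : {x : V // G.dist v x ≤ n}, w (G.dist o ↑x) < w 0 :=
    (lt_div_iff₀' hC).mp (lt_of_le_of_lt hLHS htail)
  exact lt_of_lt_of_le hmain hRHS
end

section
/- For every α > 1, the measure metric space (X, ρ, μ_α) is globally doubling with doubling constant D_α = max{q^α + 1, (q^α + 1)/(q^α − q)}: for every v ∈ X and every r > 0, μ_α(B_ρ(v,2r)) ≤ D_α μ_α(B_ρ(v,r)), where B_ρ(v,r) = {u ∈ X : ρ(v,u) < r}. -/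
open scoped BigOperators
open scoped Classical

open TreeBergman in
/-- |v∧u|, the norm of the confluent of v and u (the Gromov product of u and v
with respect to o). -/
noncomputable def confNorm {V : Type*} (G : SimpleGraph V) (o u v : V) : ℕ :=
  (G.dist o u + G.dist o v - G.dist u v) / 2

open TreeBergman in
/-- The Gromov distance ρ(v,u) = e^{-|v∧u|} (and 0 on the diagonal). -/
noncomputable def grho {V : Type*} (G : SimpleGraph V) (o v u : V) : ℝ :=
  if u = v then 0 else Real.exp (-(confNorm G o v u : ℝ))

open TreeBergman in
/-- μ_α measure of the Gromov ball B_ρ(v,r). -/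
noncomputable def muBall {V : Type*} (G : SimpleGraph V) (q : ℕ) (o : V) (α : ℝ)
    (v : V) (r : ℝ) : ENNReal :=
  ∑' u : V, if grho G o v u < r then ENNReal.ofReal (expw q G o α u) else 0


namespace TreeAux
variable {V : Type*} {G : SimpleGraph V}

/-- concat of path is a path if endpoint fresh -/
lemma isPath_concat {u v w : V} {p : G.Walk u v} (hp : p.IsPath) (h : G.Adj v w)
    (hw : w ∉ p.support) : (p.concat h).IsPath := by
  rw [← SimpleGraph.Walk.isPath_reverse_iff, SimpleGraph.Walk.reverse_concat,
    SimpleGraph.Walk.cons_isPath_iff]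
  refine ⟨by simpa using hp, by simpa using hw⟩

/-- existence of geodesic path -/
lemma exists_geo (hconn : G.Connected) (u v : V) :
    ∃ p : G.Walk u v, p.IsPath ∧ p.length = G.dist u v :=
  hconn.exists_path_of_dist u v |>.imp (fun p hp => ⟨hp.1, hp.2⟩)

/-- parent existence wrt any root -/
lemma parent_exists (hconn : G.Connected) (x v : V) (h : G.dist x v ≠ 0) :
    ∃ p, G.Adj v p ∧ G.dist x p + 1 = G.dist x v := by
  obtain ⟨W, hW, hlen⟩ := exists_geo hconn x v
  cases hn : W.reverse with
  | nil =>
    exfalso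
    have : W.length = 0 := by
      have := congrArg SimpleGraph.Walk.length hn
      simpa using this
    omega
  | @cons _ p _ hadj W' =>
    refine ⟨p, hadj, ?_⟩
    have hlen' : W'.length + 1 = G.dist x v := by
      have := congrArg SimpleGraph.Walk.length hn
      simp at this
      omega
    have h1 : G.dist x p ≤ W'.length := by
      simpa [SimpleGraph.dist_comm] using SimpleGraph.dist_le W'
    have h2 : G.dist x v ≤ G.dist x p + 1 := by
      calc G.dist x v ≤ G.dist x p + G.dist p v := hconn.dist_triangle
        _ ≤ G.dist x p + 1 := by
            have : G.dist p v = 1 := SimpleGraph.dist_eq_one_iff_adj.2 hadj.symm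
            omega
    omega

end TreeAux

namespace TreeAux2
open SimpleGraph Walk
variable {V : Type*} {G : SimpleGraph V}

lemma dist_le_of_mem_support {x u y : V} {P : G.Walk x u} (hy : y ∈ P.support) :
    G.dist x y ≤ P.length ∧ G.dist x y + G.dist y u ≤ P.length := by
  have h1 : G.dist x y ≤ (P.takeUntil y hy).length := SimpleGraph.dist_le _
  have h2 : G.dist y u ≤ (P.dropUntil y hy).length := SimpleGraph.dist_le _
  have h3 : (P.takeUntil y hy).length + (P.dropUntil y hy).length = P.length := by
    conv_rhs => rw [← P.take_spec hy]
    rw [SimpleGraph.Walk.length_append]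
  omega

/-- P1: adjacent vertices have different distances to any root -/
lemma adj_dist_ne (hconn : G.Connected) (hacyc : G.IsAcyclic) (x : V) {u v : V}
    (h : G.Adj u v) : G.dist x u ≠ G.dist x v := by
  intro heq
  obtain ⟨P, hP, hPl⟩ := TreeAux.exists_geo hconn x u
  have hv : v ∉ P.support := by
    intro hvP
    have := dist_le_of_mem_support hvP
    have hvu : G.dist v u = 0 := by omega
    have : v = u := by
      have := (hconn.dist_eq_zero_iff (u := v) (v := u)).1 hvu
      exact this
    exact h.ne this.symm
  have hQ : (P.concat h).IsPath := TreeAux.isPath_concat hP h hv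
  obtain ⟨P', hP', hP'l⟩ := TreeAux.exists_geo hconn x v
  have := hacyc.path_unique ⟨P.concat h, hQ⟩ ⟨P', hP'⟩
  have hlen : (P.concat h).length = P'.length := by
    rw [show P.concat h = P' from congrArg Subtype.val this]
  rw [SimpleGraph.Walk.length_concat] at hlen
  omega

/-- P2: uniqueness of parent wrt any root -/
lemma parent_unique (hconn : G.Connected) (hacyc : G.IsAcyclic) {x v p₁ p₂ : V}
    (h₁ : G.Adj v p₁) (h₂ : G.Adj v p₂)
    (hd₁ : G.dist x p₁ + 1 = G.dist x v) (hd₂ : G.dist x p₂ + 1 = G.dist x v) :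
    p₁ = p₂ := by
  obtain ⟨P₁, hP₁, hP₁l⟩ := TreeAux.exists_geo hconn x p₁
  obtain ⟨P₂, hP₂, hP₂l⟩ := TreeAux.exists_geo hconn x p₂
  have hv₁ : v ∉ P₁.support := fun hvP => by
    have := dist_le_of_mem_support hvP; omega
  have hv₂ : v ∉ P₂.support := fun hvP => by
    have := dist_le_of_mem_support hvP; omega
  have hQ₁ : (P₁.concat h₁.symm).IsPath := TreeAux.isPath_concat hP₁ h₁.symm hv₁
  have hQ₂ : (P₂.concat h₂.symm).IsPath := TreeAux.isPath_concat hP₂ h₂.symm hv₂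
  have := hacyc.path_unique ⟨P₁.concat h₁.symm, hQ₁⟩ ⟨P₂.concat h₂.symm, hQ₂⟩
  have heq : P₁.concat h₁.symm = P₂.concat h₂.symm := congrArg Subtype.val this
  obtain ⟨hv, -⟩ := SimpleGraph.Walk.concat_inj heq
  exact hv

/-- adjacent vertices: distance to root differs by one -/
lemma adj_dist_cases (hconn : G.Connected) (hacyc : G.IsAcyclic) (x : V) {u v : V}
    (h : G.Adj u v) : G.dist x v = G.dist x u + 1 ∨ G.dist x u = G.dist x v + 1 := by
  have hne := adj_dist_ne hconn hacyc x h
  have h1 : G.dist x v ≤ G.dist x u + 1 := by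
    calc G.dist x v ≤ G.dist x u + G.dist u v := hconn.dist_triangle
      _ = G.dist x u + 1 := by rw [SimpleGraph.dist_eq_one_iff_adj.2 h]
  have h2 : G.dist x u ≤ G.dist x v + 1 := by
    calc G.dist x u ≤ G.dist x v + G.dist v u := hconn.dist_triangle
      _ = G.dist x v + 1 := by rw [SimpleGraph.dist_eq_one_iff_adj.2 h.symm]
  omega

end TreeAux2

namespace TreeAux3
variable {V : Type*} {G : SimpleGraph V}

/-- Claim C: if the parent of v (wrt x) is farther from u than v, then u is in the sector of v. -/
lemma claimC (hconn : G.Connected) (hacyc : G.IsAcyclic) (x : V) :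
    ∀ d : ℕ, ∀ {u v v' : V}, G.dist u v = d → G.Adj v v' →
      G.dist x v' + 1 = G.dist x v → G.dist u v' = d + 1 →
      G.dist x u = G.dist x v + d := by
  intro d
  induction d with
  | zero =>
    intro u v v' huv _ _ _
    have hreach : G.Reachable u v := hconn u v
    have : u = v := (hreach.dist_eq_zero_iff).1 huv
    subst this; omega
  | succ d ih =>
    intro u v v' huv hadj hpar huv'
    obtain ⟨z, hzadj, hz⟩ := TreeAux.parent_exists hconn u v (by omega)
    have hzd : G.dist u z = d := by omega
    have hzv' : z ≠ v' := by
      intro h; subst h; omega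
    have hxz : G.dist x z = G.dist x v + 1 := by
      rcases TreeAux2.adj_dist_cases hconn hacyc x hzadj with h | h
      · omega
      · exfalso
        exact hzv' (TreeAux2.parent_unique hconn hacyc hzadj hadj (by omega) hpar)
    have := ih hzd hzadj.symm (by omega) (by rw [SimpleGraph.dist_comm] at huv ⊢; omega)
    omega

/-- Sector characterization: S_m = sector of the ancestor of v at level m. -/
lemma sector_char (hconn : G.Connected) (hacyc : G.IsAcyclic) (o : V) :
    ∀ k : ℕ, ∀ v : V, ∀ m : ℕ, m + k = G.dist o v →
      ∃ w : V, G.dist o w = m ∧ G.dist w v = k ∧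
        ∀ u : V, (u = v ∨ G.dist v u + 2 * m ≤ G.dist o v + G.dist o u) ↔
          G.dist o u = G.dist o w + G.dist w u := by
  intro k
  induction k with
  | zero =>
    intro v m hm
    refine ⟨v, by omega, SimpleGraph.dist_self, fun u => ?_⟩
    constructor
    · rintro (rfl | h)
      · simp
      · have htri : G.dist o u ≤ G.dist o v + G.dist v u := hconn.dist_triangle
        omega
    · intro h
      right; omega
  | succ k ih =>
    intro v m hm
    obtain ⟨v', hadj, hpar⟩ := TreeAux.parent_exists hconn o v (by omega)
    obtain ⟨w, hw0, hwv', hiff⟩ := ih v' m (by omega)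
    have hwv : G.dist w v = k + 1 := by
      have h1 : G.dist w v ≤ G.dist w v' + G.dist v' v := hconn.dist_triangle
      have h2 : G.dist v' v = 1 := SimpleGraph.dist_eq_one_iff_adj.2 hadj.symm
      have h3 : G.dist o v ≤ G.dist o w + G.dist w v := hconn.dist_triangle
      omega
    refine ⟨w, hw0, hwv, fun u => ?_⟩
    have c1 : G.dist v' u = G.dist u v' := SimpleGraph.dist_comm ..
    have c2 : G.dist v u = G.dist u v := SimpleGraph.dist_comm ..
    constructor
    · rintro (rfl | h)
      · rw [hwv]; omega
      · rcases TreeAux2.adj_dist_cases hconn hacyc u hadj with h1 | h1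
        · -- dist u v' = dist u v + 1 : u is in the sector of v
          have hsec : G.dist o u = G.dist o v + G.dist u v :=
            claimC hconn hacyc o (G.dist u v) rfl hadj hpar h1
          have t1 : G.dist w u ≤ G.dist w v + G.dist v u := hconn.dist_triangle
          have t2 : G.dist o u ≤ G.dist o w + G.dist w u := hconn.dist_triangle
          omega
        · -- dist u v = dist u v' + 1 : recurse to v'
          exact (hiff u).1 (Or.inr (by omega))
    · intro h
      right
      have t1 : G.dist v u ≤ G.dist v w + G.dist w u := hconn.dist_triangle
      have c3 : G.dist v w = G.dist w v := SimpleGraph.dist_comm ..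
      omega

end TreeAux3

namespace TreeAux4
open Finset
variable {V : Type*} {G : SimpleGraph V} [G.LocallyFinite] {q : ℕ}

/-- number of children (upward neighbors) of a non-root vertex -/
lemma children_card (hconn : G.Connected) (hacyc : G.IsAcyclic)
    (hreg : G.IsRegularOfDegree (q + 1)) (o u : V) (hu : G.dist o u ≠ 0) :
    ((G.neighborFinset u).filter (fun y => G.dist o y = G.dist o u + 1)).card = q := by
  classical
  obtain ⟨p, hp_adj, hp⟩ := TreeAux.parent_exists hconn o u hu
  have hset : (G.neighborFinset u).filter (fun y => G.dist o y = G.dist o u + 1)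
      = (G.neighborFinset u).erase p := by
    ext y
    simp only [mem_filter, mem_erase, SimpleGraph.mem_neighborFinset]
    constructor
    · rintro ⟨hadj, hd⟩
      refine ⟨fun hyp => ?_, hadj⟩
      subst hyp; omega
    · rintro ⟨hne, hadj⟩
      refine ⟨hadj, ?_⟩
      rcases TreeAux2.adj_dist_cases hconn hacyc o hadj with h | h
      · exact h
      · exact absurd (TreeAux2.parent_unique hconn hacyc hadj hp_adj (by omega) hp) hne
  have hpmem : p ∈ G.neighborFinset u := by
    rw [SimpleGraph.mem_neighborFinset]; exact hp_adj
  rw [hset, card_erase_of_mem hpmem]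
  have := hreg u
  rw [← SimpleGraph.card_neighborFinset_eq_degree] at this
  omega

/-- number of children of the root -/
lemma children_card_root (hconn : G.Connected)
    (hreg : G.IsRegularOfDegree (q + 1)) (o : V) :
    ((G.neighborFinset o).filter (fun y => G.dist o y = G.dist o o + 1)).card = q + 1 := by
  classical
  have hset : (G.neighborFinset o).filter (fun y => G.dist o y = G.dist o o + 1)
      = G.neighborFinset o := by
    apply filter_true_of_mem
    intro y hy
    rw [SimpleGraph.mem_neighborFinset] at hy
    rw [SimpleGraph.dist_self]
    simpa using SimpleGraph.dist_eq_one_iff_adj.2 hy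
  rw [hset]
  have := hreg o
  rw [← SimpleGraph.card_neighborFinset_eq_degree] at this
  omega

/-- level sets of a sector are finite with explicit cardinality -/
lemma levels (hconn : G.Connected) (hacyc : G.IsAcyclic)
    (hreg : G.IsRegularOfDegree (q + 1)) (o w : V) (k : ℕ) :
    ∃ s : Finset V,
      (∀ x, x ∈ s ↔ G.dist o x = G.dist o w + G.dist w x ∧ G.dist w x = k) ∧
      (G.dist o w ≠ 0 → s.card = q ^ k) ∧
      (G.dist o w = 0 → s.card = if k = 0 then 1 else (q + 1) * q ^ (k - 1)) := by
  classical
  induction k with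
  | zero =>
    refine ⟨{w}, fun x => ?_, fun _ => by simp, fun _ => by simp⟩
    simp only [mem_singleton]
    constructor
    · rintro rfl
      simp [SimpleGraph.dist_self]
    · rintro ⟨_, hd⟩
      exact ((hconn w x).dist_eq_zero_iff.1 hd).symm
  | succ k ih =>
    obtain ⟨s, hmem, hcard1, hcard2⟩ := ih
    refine ⟨s.biUnion (fun u => (G.neighborFinset u).filter
      (fun y => G.dist o y = G.dist o u + 1)), ?_, ?_⟩
    · -- membership
      intro x
      simp only [mem_biUnion, mem_filter, SimpleGraph.mem_neighborFinset]
      constructor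
      · rintro ⟨u, hu, hadj, hd⟩
        obtain ⟨husec, huk⟩ := (hmem u).1 hu
        have t1 : G.dist w x ≤ G.dist w u + G.dist u x := hconn.dist_triangle
        have t2 : G.dist u x = 1 := SimpleGraph.dist_eq_one_iff_adj.2 hadj
        have t3 : G.dist o x ≤ G.dist o w + G.dist w x := hconn.dist_triangle
        constructor <;> omega
      · rintro ⟨hxsec, hxk⟩
        obtain ⟨z, hzadj, hz⟩ := TreeAux.parent_exists hconn w x (by omega)
        have hoz : G.dist o z = G.dist o w + k := by
          have t1 : G.dist o z ≤ G.dist o w + G.dist w z := hconn.dist_triangle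
          rcases TreeAux2.adj_dist_cases hconn hacyc o hzadj with h | h
          · omega
          · omega
        refine ⟨z, (hmem z).2 ⟨by omega, by omega⟩, hzadj.symm, by omega⟩
    · -- cardinality
      have hdisj : ∀ u₁ ∈ s, ∀ u₂ ∈ s, u₁ ≠ u₂ →
          Disjoint ((G.neighborFinset u₁).filter (fun y => G.dist o y = G.dist o u₁ + 1))
            ((G.neighborFinset u₂).filter (fun y => G.dist o y = G.dist o u₂ + 1)) := by
        intro u₁ h₁ u₂ h₂ hne
        rw [disjoint_left]
        intro y hy₁ hy₂
        simp only [mem_filter, SimpleGraph.mem_neighborFinset] at hy₁ hy₂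
        obtain ⟨c₁, -⟩ := (hmem u₁).1 h₁
        obtain ⟨c₂, -⟩ := (hmem u₂).1 h₂
        exact hne (TreeAux2.parent_unique hconn hacyc (x := o) (v := y)
          hy₁.1.symm hy₂.1.symm (by omega) (by omega))
      have hbu := Finset.card_biUnion hdisj
      by_cases how : G.dist o w = 0
      · -- w is the root
        refine ⟨fun h => absurd how h, fun _ => ?_⟩
        by_cases hk : k = 0
        · subst hk
          have hs : s = {w} := by
            ext x
            rw [hmem x, mem_singleton]
            constructor
            · rintro ⟨-, hd⟩
              exact ((hconn w x).dist_eq_zero_iff.1 hd).symm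
            · rintro rfl
              simp [SimpleGraph.dist_self]
          have hw_o : o = w := (hconn o w).dist_eq_zero_iff.1 how
          subst hw_o
          rw [hbu, hs, Finset.sum_singleton]
          simpa using children_card_root hconn hreg o
        · have hcards : s.card = (q + 1) * q ^ (k - 1) := by
            rw [hcard2 how]; simp [hk]
          rw [hbu]
          have : ∀ u ∈ s, ((G.neighborFinset u).filter
              (fun y => G.dist o y = G.dist o u + 1)).card = q := by
            intro u hu
            obtain ⟨c, ck⟩ := (hmem u).1 hu
            exact children_card hconn hacyc hreg o u (by omega)
          rw [Finset.sum_congr rfl this, Finset.sum_const, hcards, smul_eq_mul]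
          have hk1 : k - 1 + 1 = k := by omega
          simp only [if_neg (Nat.succ_ne_zero k), Nat.add_sub_cancel]
          rw [mul_assoc, ← pow_succ, hk1]
      · -- w is not the root
        refine ⟨fun _ => ?_, fun h => absurd h how⟩
        rw [hbu]
        have : ∀ u ∈ s, ((G.neighborFinset u).filter
            (fun y => G.dist o y = G.dist o u + 1)).card = q := by
          intro u hu
          obtain ⟨c, ck⟩ := (hmem u).1 hu
          exact children_card hconn hacyc hreg o u (by omega)
        rw [Finset.sum_congr rfl this, Finset.sum_const, hcard1 how, smul_eq_mul, ← pow_succ]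

end TreeAux4

namespace TreeAux5
open Finset ENNReal
variable {V : Type*} {G : SimpleGraph V}

/-- partition a tsum over levels -/
lemma tsum_partition (A : Set V) (w : V) (L : ℕ → Finset V)
    (hL : ∀ k x, x ∈ L k ↔ x ∈ A ∧ G.dist w x = k) (f : V → ℝ≥0∞) :
    ∑' u, (if u ∈ A then f u else 0) = ∑' k, ∑ u ∈ L k, f u := by
  have step1 : ∀ u, (if u ∈ A then f u else 0) = ∑' k, (if u ∈ L k then f u else 0) := by
    intro u
    by_cases hu : u ∈ A
    · rw [if_pos hu]
      rw [tsum_eq_single (G.dist w u)]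
      · rw [if_pos ((hL _ u).2 ⟨hu, rfl⟩)]
      · intro k hk
        rw [if_neg]
        intro hmem
        exact hk ((hL k u).1 hmem).2.symm
    · rw [if_neg hu]
      symm
      apply ENNReal.tsum_eq_zero.2
      intro k
      rw [if_neg]
      intro hmem
      exact hu ((hL k u).1 hmem).1
  calc ∑' u, (if u ∈ A then f u else 0) = ∑' u, ∑' k, (if u ∈ L k then f u else 0) := by
        exact tsum_congr step1
    _ = ∑' k, ∑' u, (if u ∈ L k then f u else 0) := ENNReal.tsum_comm
    _ = ∑' k, ∑ u ∈ L k, f u := by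
        refine tsum_congr fun k => ?_
        rw [tsum_eq_sum (s := L k) (fun b hb => if_neg hb)]
        exact Finset.sum_congr rfl fun u hu => if_pos hu

end TreeAux5

namespace TreeAux6
open Finset ENNReal TreeBergman
variable {V : Type*} {G : SimpleGraph V} [G.LocallyFinite] {q : ℕ}

/-- real algebra: the level-k term of a sector sum -/
lemma term_eq (hq : 0 < q) (α : ℝ) (m k : ℕ) :
    ((q : ℝ)) ^ k * (q : ℝ) ^ (-(α * ((m + k : ℕ) : ℝ)))
      = (q : ℝ) ^ (-(α * (m : ℝ))) * ((q : ℝ) ^ ((1 : ℝ) - α)) ^ k := by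
  have hq0 : (0 : ℝ) < q := by exact_mod_cast hq
  rw [← Real.rpow_natCast (q : ℝ) k, ← Real.rpow_add hq0,
    ← Real.rpow_natCast ((q : ℝ) ^ ((1 : ℝ) - α)) k, ← Real.rpow_mul hq0.le,
    ← Real.rpow_add hq0]
  push_cast
  ring_nf

/-- the μ_α-measure of a set, as a tsum of indicator weights -/
noncomputable def muSet (G : SimpleGraph V) (q : ℕ) (o : V) (α : ℝ) (A : Set V) : ℝ≥0∞ :=
  ∑' u, if u ∈ A then ENNReal.ofReal (expw q G o α u) else 0

lemma muSet_mono {o : V} {α : ℝ} {A B : Set V} (h : A ⊆ B) :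
    muSet G q o α A ≤ muSet G q o α B := by
  refine ENNReal.tsum_le_tsum fun u => ?_
  by_cases hu : u ∈ A
  · rw [if_pos hu, if_pos (h hu)]
  · rw [if_neg hu]; exact zero_le

lemma muSet_singleton (o v : V) (α : ℝ) :
    muSet G q o α {v} = ENNReal.ofReal (expw q G o α v) := by
  rw [muSet, tsum_eq_single v]
  · simp
  · intro u hu
    rw [if_neg (by simpa using hu)]

/-- measure of a sector at level m ≥ 1 -/
lemma muSet_sector (hconn : G.Connected) (hacyc : G.IsAcyclic)
    (hreg : G.IsRegularOfDegree (q + 1)) (hq : 0 < q) (o w : V) (α : ℝ)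
    (hs1 : (q : ℝ) ^ ((1 : ℝ) - α) < 1)
    (hm : G.dist o w ≠ 0) :
    muSet G q o α (sector G o w)
      = ENNReal.ofReal ((q : ℝ) ^ (-(α * (G.dist o w : ℝ)))
          * (1 - (q : ℝ) ^ ((1 : ℝ) - α))⁻¹) := by
  classical
  set m := G.dist o w with hmdef
  set s : ℝ := (q : ℝ) ^ ((1 : ℝ) - α) with hsdef
  have hs0 : 0 ≤ s := Real.rpow_nonneg (by positivity) _
  have hc0 : (0:ℝ) ≤ (q : ℝ) ^ (-(α * (m : ℝ))) := Real.rpow_nonneg (by positivity) _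
  choose L hLmem hLcard _ using fun k => TreeAux4.levels hconn hacyc hreg o w k
  have hL : ∀ k x, x ∈ L k ↔ x ∈ sector G o w ∧ G.dist w x = k := by
    intro k x; exact hLmem k x
  rw [muSet, TreeAux5.tsum_partition (sector G o w) w L hL]
  have hsum : ∀ k, ∑ u ∈ L k, ENNReal.ofReal (expw q G o α u)
      = ENNReal.ofReal ((q : ℝ) ^ (-(α * (m : ℝ))) * s ^ k) := by
    intro k
    have hconst : ∀ u ∈ L k, ENNReal.ofReal (expw q G o α u)
        = ENNReal.ofReal ((q : ℝ) ^ (-(α * ((m + k : ℕ) : ℝ)))) := by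
      intro u hu
      obtain ⟨husec, huk⟩ := (hL k u).1 hu
      have : G.dist o u = m + k := by rw [husec, huk]
      rw [expw, this]
    rw [Finset.sum_congr rfl hconst, Finset.sum_const, hLcard k hm, nsmul_eq_mul]
    rw [← term_eq hq α m k, ENNReal.ofReal_mul (by positivity)]
    congr 1
    push_cast
    rw [ENNReal.ofReal_pow (by positivity), ENNReal.ofReal_natCast]
  rw [tsum_congr hsum]
  have : ∀ k : ℕ, ENNReal.ofReal ((q : ℝ) ^ (-(α * (m : ℝ))) * s ^ k)
      = ENNReal.ofReal ((q : ℝ) ^ (-(α * (m : ℝ)))) * (ENNReal.ofReal s) ^ k := by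
    intro k
    rw [ENNReal.ofReal_mul hc0, ENNReal.ofReal_pow hs0]
  rw [tsum_congr this, ENNReal.tsum_mul_left, ENNReal.tsum_geometric,
    ENNReal.ofReal_mul hc0]
  congr 1
  rw [← ENNReal.ofReal_one, ← ENNReal.ofReal_sub _ hs0, ENNReal.ofReal_inv_of_pos (by linarith)]

/-- measure of the whole tree -/
lemma muSet_univ (hconn : G.Connected) (hacyc : G.IsAcyclic)
    (hreg : G.IsRegularOfDegree (q + 1)) (hq : 0 < q) (o : V) (α : ℝ)
    (hs1 : (q : ℝ) ^ ((1 : ℝ) - α) < 1) :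
    muSet G q o α Set.univ
      = ENNReal.ofReal (1 + ((q : ℝ) + 1) * (q : ℝ) ^ (-α)
          * (1 - (q : ℝ) ^ ((1 : ℝ) - α))⁻¹) := by
  classical
  set s : ℝ := (q : ℝ) ^ ((1 : ℝ) - α) with hsdef
  have hs0 : 0 ≤ s := Real.rpow_nonneg (by positivity) _
  have hqa0 : (0:ℝ) ≤ ((q : ℝ) + 1) * (q : ℝ) ^ (-α) := by positivity
  choose L hLmem _ hLcard using fun k => TreeAux4.levels hconn hacyc hreg o o k
  have hL : ∀ k x, x ∈ L k ↔ x ∈ (Set.univ : Set V) ∧ G.dist o x = k := by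
    intro k x
    rw [hLmem k x]
    simp [SimpleGraph.dist_self]
  rw [muSet, TreeAux5.tsum_partition Set.univ o L hL]
  have hoo : G.dist o o = 0 := SimpleGraph.dist_self
  have hsum : ∀ k, ∑ u ∈ L k, ENNReal.ofReal (expw q G o α u)
      = (if k = 0 then 1 else (q+1) * q ^ (k-1) : ℕ) * ENNReal.ofReal ((q : ℝ) ^ (-(α * (k : ℝ)))) := by
    intro k
    have hconst : ∀ u ∈ L k, ENNReal.ofReal (expw q G o α u)
        = ENNReal.ofReal ((q : ℝ) ^ (-(α * (k : ℝ)))) := by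
      intro u hu
      have := ((hL k u).1 hu).2
      rw [expw, this]
    rw [Finset.sum_congr rfl hconst, Finset.sum_const, hLcard k hoo, nsmul_eq_mul]
  rw [tsum_congr hsum, tsum_eq_zero_add' ENNReal.summable]
  have h0 : ((if (0:ℕ) = 0 then 1 else (q+1) * q ^ (0-1) : ℕ) : ℝ≥0∞)
      * ENNReal.ofReal ((q : ℝ) ^ (-(α * ((0:ℕ) : ℝ)))) = 1 := by
    simp
  rw [h0]
  have hterm : ∀ k : ℕ, ((if (k+1) = 0 then 1 else (q+1) * q ^ (k+1-1) : ℕ) : ℝ≥0∞)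
      * ENNReal.ofReal ((q : ℝ) ^ (-(α * ((k+1 : ℕ) : ℝ))))
      = ENNReal.ofReal (((q : ℝ) + 1) * (q : ℝ) ^ (-α)) * (ENNReal.ofReal s) ^ k := by
    intro k
    rw [if_neg (Nat.succ_ne_zero k), Nat.add_sub_cancel]
    rw [← ENNReal.ofReal_natCast ((q+1)*q^k), ← ENNReal.ofReal_mul (by positivity),
        ← ENNReal.ofReal_pow hs0, ← ENNReal.ofReal_mul (by positivity)]
    congr 1
    push_cast
    have hte := term_eq hq α 1 k
    have h1 : -(α * ((k:ℝ)+1)) = -(α * ((1+k : ℕ):ℝ)) := by push_cast; ring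
    rw [h1, mul_assoc, hte, hsdef]
    have h2 : -(α * ((1:ℕ):ℝ)) = -α := by push_cast; ring
    rw [h2]
    ring
  rw [tsum_congr hterm, ENNReal.tsum_mul_left, ENNReal.tsum_geometric]
  have hinv : (1 - ENNReal.ofReal s)⁻¹ = ENNReal.ofReal ((1 - s)⁻¹) := by
    rw [← ENNReal.ofReal_one, ← ENNReal.ofReal_sub _ hs0,
      ENNReal.ofReal_inv_of_pos (by linarith)]
  have nn : 0 ≤ ((q:ℝ) + 1) * (q:ℝ) ^ (-α) * (1 - s)⁻¹ :=
    mul_nonneg hqa0 (inv_nonneg.2 (by linarith))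
  rw [hinv, ← ENNReal.ofReal_mul hqa0,
    ENNReal.ofReal_add zero_le_one nn, ENNReal.ofReal_one]

end TreeAux6



namespace TreeAux7
open Finset ENNReal TreeBergman TreeAux6
variable {V : Type*} {G : SimpleGraph V} [G.LocallyFinite] {q : ℕ}

/-- the doubling step: μ(S_n) ≤ D μ(S_{n+1}) -/
lemma step (hq : 2 ≤ q) (hconn : G.Connected) (hacyc : G.IsAcyclic)
    (hreg : G.IsRegularOfDegree (q + 1)) (o v : V) (α : ℝ) (hα : 1 < α) (n : ℕ) :
    muSet G q o α {u | u = v ∨ G.dist v u + 2 * n ≤ G.dist o v + G.dist o u}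
      ≤ ENNReal.ofReal (max ((q : ℝ) ^ α + 1) (((q : ℝ) ^ α + 1) / ((q : ℝ) ^ α - q)))
        * muSet G q o α {u | u = v ∨ G.dist v u + 2 * (n+1) ≤ G.dist o v + G.dist o u} := by
  classical
  -- real number facts
  have hq1 : (1 : ℝ) < (q : ℝ) := by exact_mod_cast (by omega : 1 < q)
  have hq2 : (2 : ℝ) ≤ (q : ℝ) := by exact_mod_cast hq
  have hq0 : (0 : ℝ) < q := by linarith
  set β : ℝ := (q : ℝ) ^ α with hβdef
  set s : ℝ := (q : ℝ) ^ ((1 : ℝ) - α) with hsdef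
  set Dm : ℝ := max (β + 1) ((β + 1) / (β - q)) with hDdef
  have hs1 : s < 1 := Real.rpow_lt_one_of_one_lt_of_neg hq1 (by linarith)
  have hs0 : 0 < s := Real.rpow_pos_of_pos hq0 _
  have hβq : (q : ℝ) < β := by
    have := Real.rpow_lt_rpow_left_iff (x := (q:ℝ)) (y := 1) (z := α) hq1
    simpa [Real.rpow_one] using this.2 hα
  have hβ0 : (0 : ℝ) < β := by linarith
  have hsβ : s * β = q := by
    rw [hsdef, hβdef, ← Real.rpow_add hq0]
    simp
  have h1s : (1 : ℝ) - s = (β - q) / β := by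
    field_simp
    nlinarith [hsβ]
  have hinv : (1 - s)⁻¹ = β / (β - q) := by
    rw [h1s, inv_div]
  have hβq0 : (0 : ℝ) < β - q := by linarith
  have hI1 : (1 : ℝ) ≤ Dm := le_trans (by linarith) (le_max_left _ _)
  have hI2 : (1 - s)⁻¹ ≤ Dm := by
    refine le_trans ?_ (le_max_right _ _)
    rw [hinv]
    gcongr
    linarith
  have hqα : (q : ℝ) ^ (-α) = β⁻¹ := by
    rw [Real.rpow_neg hq0.le]
  have hwhole : (1 : ℝ) + ((q : ℝ) + 1) * (q : ℝ) ^ (-α) * (1 - s)⁻¹ = (β + 1) / (β - q) := by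
    rw [hqα, hinv]
    field_simp
    ring
  -- set machinery
  set Sn : Set V := {u | u = v ∨ G.dist v u + 2 * n ≤ G.dist o v + G.dist o u} with hSn
  set Sn1 : Set V := {u | u = v ∨ G.dist v u + 2 * (n+1) ≤ G.dist o v + G.dist o u} with hSn1
  have hSsec : ∀ m : ℕ, m ≤ G.dist o v →
      ∃ w, G.dist o w = m ∧
        {u | u = v ∨ G.dist v u + 2 * m ≤ G.dist o v + G.dist o u} = sector G o w := by
    intro m hm
    obtain ⟨w, hw, -, hiff⟩ := TreeAux3.sector_char hconn hacyc o (G.dist o v - m) v m (by omega)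
    exact ⟨w, hw, Set.ext fun u => (hiff u)⟩
  have hStriv : ∀ m : ℕ, G.dist o v < m →
      {u | u = v ∨ G.dist v u + 2 * m ≤ G.dist o v + G.dist o u} = {v} := by
    intro m hm
    ext u
    simp only [Set.mem_setOf_eq, Set.mem_singleton_iff]
    constructor
    · rintro (rfl | h)
      · rfl
      · exfalso
        have t1 : G.dist o v ≤ G.dist o u + G.dist u v := hconn.dist_triangle
        have t2 : G.dist u v = G.dist v u := SimpleGraph.dist_comm ..
        have t3 : G.dist o u ≤ G.dist o v + G.dist v u := hconn.dist_triangle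
        omega
    · rintro rfl
      exact Or.inl rfl
  have hmuv : muSet G q o α {v} = ENNReal.ofReal ((q:ℝ) ^ (-(α * (G.dist o v : ℝ)))) := by
    rw [muSet_singleton, expw]
  -- case analysis
  rcases lt_trichotomy (G.dist o v) n with hc | hc | hc
  · -- dv < n : both sets are {v}
    rw [hSn, hSn1, hStriv n hc, hStriv (n+1) (by omega)]
    calc muSet G q o α {v} = 1 * muSet G q o α {v} := (one_mul _).symm
      _ ≤ ENNReal.ofReal Dm * muSet G q o α {v} := by
          gcongr
          simpa using ENNReal.ofReal_le_ofReal hI1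
  · -- dv = n : S_n is the sector of v, S_{n+1} = {v}
    subst hc
    rw [hSn, hSn1, hStriv (G.dist o v + 1) (by omega)]
    by_cases hdv : G.dist o v = 0
    · -- v = o : S_n = univ
      have huniv : {u | u = v ∨ G.dist v u + 2 * G.dist o v ≤ G.dist o v + G.dist o u}
          = Set.univ := by
        ext u
        simp only [Set.mem_setOf_eq, Set.mem_univ, iff_true]
        right
        have t1 : G.dist v u ≤ G.dist v o + G.dist o u := hconn.dist_triangle
        have t2 : G.dist v o = G.dist o v := SimpleGraph.dist_comm ..
        omega
      rw [huniv, muSet_univ hconn hacyc hreg (by omega) o α hs1, hmuv, hdv]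
      have : ((0:ℕ):ℝ) = 0 := by norm_num
      rw [this]
      rw [← ENNReal.ofReal_mul (by positivity : (0:ℝ) ≤ Dm)]
      apply ENNReal.ofReal_le_ofReal
      rw [hwhole]
      have : (q:ℝ) ^ (-(α * 0)) = 1 := by norm_num
      rw [this, mul_one]
      exact le_max_right _ _
    · -- dv ≥ 1 : sector of v vs {v}
      obtain ⟨w, hw, hset⟩ := hSsec (G.dist o v) le_rfl
      rw [hset, muSet_sector hconn hacyc hreg (by omega) o w α hs1 (by omega), hmuv, hw]
      rw [← ENNReal.ofReal_mul (by positivity : (0:ℝ) ≤ Dm)]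
      apply ENNReal.ofReal_le_ofReal
      have hc0 : (0:ℝ) ≤ (q:ℝ) ^ (-(α * (G.dist o v : ℝ))) := Real.rpow_nonneg hq0.le _
      calc (q:ℝ) ^ (-(α * (G.dist o v : ℝ))) * (1 - s)⁻¹
          ≤ (q:ℝ) ^ (-(α * (G.dist o v : ℝ))) * Dm := by gcongr
        _ = Dm * (q:ℝ) ^ (-(α * (G.dist o v : ℝ))) := mul_comm _ _
  · -- n < dv
    obtain ⟨w1, hw1, hset1⟩ := hSsec (n+1) (by omega)
    rw [hSn1, hset1, muSet_sector hconn hacyc hreg (by omega) o w1 α hs1 (by omega), hw1]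
    by_cases hn : n = 0
    · -- S_0 = univ
      subst hn
      have huniv : Sn = Set.univ := by
        ext u
        simp only [hSn, Set.mem_setOf_eq, Set.mem_univ, iff_true]
        right
        have t1 : G.dist v u ≤ G.dist v o + G.dist o u := hconn.dist_triangle
        have t2 : G.dist v o = G.dist o v := SimpleGraph.dist_comm ..
        omega
      rw [huniv, muSet_univ hconn hacyc hreg (by omega) o α hs1]
      rw [← ENNReal.ofReal_mul (by positivity : (0:ℝ) ≤ Dm)]
      apply ENNReal.ofReal_le_ofReal
      have hexp : (q:ℝ) ^ (-(α * (((0:ℕ)+1:ℕ)):ℝ)) = β⁻¹ := by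
        rw [← hqα]
        congr 1
        push_cast
        ring
      rw [hwhole, hexp]
      have key : (β+1)/(β-(q:ℝ)) = (β+1) * (β⁻¹ * (1-s)⁻¹) := by
        rw [hinv]
        field_simp
      rw [key]
      have hnn : (0:ℝ) ≤ β⁻¹ * (1-s)⁻¹ :=
        mul_nonneg (inv_nonneg.2 hβ0.le) (inv_nonneg.2 (by linarith))
      exact mul_le_mul_of_nonneg_right (le_max_left _ _) hnn
    · -- both sectors
      obtain ⟨w0, hw0, hset0⟩ := hSsec n (by omega)
      rw [hSn, hset0, muSet_sector hconn hacyc hreg (by omega) o w0 α hs1 (by omega), hw0]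
      rw [← ENNReal.ofReal_mul (by positivity : (0:ℝ) ≤ Dm)]
      apply ENNReal.ofReal_le_ofReal
      have hstep : (q:ℝ) ^ (-(α * (n : ℝ))) = β * (q:ℝ) ^ (-(α * ((n+1 : ℕ) : ℝ))) := by
        rw [hβdef, ← Real.rpow_add hq0]
        congr 1
        push_cast
        ring
      have hc0 : (0:ℝ) ≤ (q:ℝ) ^ (-(α * ((n+1:ℕ) : ℝ))) := Real.rpow_nonneg hq0.le _
      have hβD : β ≤ Dm := le_trans (by linarith) (le_max_left _ _)
      calc (q:ℝ) ^ (-(α * (n : ℝ))) * (1 - s)⁻¹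
          = β * ((q:ℝ) ^ (-(α * ((n+1:ℕ) : ℝ))) * (1 - s)⁻¹) := by rw [hstep]; ring
        _ ≤ Dm * ((q:ℝ) ^ (-(α * ((n+1:ℕ) : ℝ))) * (1 - s)⁻¹) := by
            gcongr

end TreeAux7

open TreeBergman in
/-- (X, ρ, μ_α) is globally doubling with doubling constant
D_α = max{q^α+1, (q^α+1)/(q^α−q)}. -/
theorem statement16
    {V : Type*} (G : SimpleGraph V) [G.LocallyFinite] (q : ℕ) (hq : 2 ≤ q)
    (hconn : G.Connected) (hacyc : G.IsAcyclic)
    (hreg : G.IsRegularOfDegree (q + 1))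
    (o : V) (α : ℝ) (hα : 1 < α) :
    ∀ (v : V) (r : ℝ), 0 < r →
      muBall G q o α v (2 * r)
        ≤ ENNReal.ofReal
            (max ((q : ℝ) ^ α + 1) (((q : ℝ) ^ α + 1) / ((q : ℝ) ^ α - q)))
          * muBall G q o α v r := by
  classical
  intro v r hr
  have hq1 : (1:ℝ) < (q:ℝ) := by exact_mod_cast (by omega : 1 < q)
  have hq0 : (0:ℝ) < (q:ℝ) := by linarith
  set Dm : ℝ := max ((q : ℝ) ^ α + 1) (((q : ℝ) ^ α + 1) / ((q : ℝ) ^ α - q)) with hDm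
  have hβq : (q : ℝ) < (q:ℝ) ^ α := by
    have := Real.rpow_lt_rpow_left_iff (x := (q:ℝ)) (y := 1) (z := α) hq1
    simpa [Real.rpow_one] using this.2 hα
  have hI1 : (1:ℝ) ≤ Dm := le_trans (by linarith) (le_max_left _ _)
  have hball : ∀ ρ : ℝ, muBall G q o α v ρ
      = TreeAux6.muSet G q o α {u | grho G o v u < ρ} := fun ρ => rfl
  have hone : ∀ u, grho G o v u ≤ 1 := by
    intro u
    rw [grho]
    split
    · norm_num
    · calc Real.exp (-(confNorm G o v u : ℝ)) ≤ Real.exp 0 :=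
            Real.exp_le_exp.2 (neg_nonpos.2 (Nat.cast_nonneg _))
        _ = 1 := Real.exp_zero
  have hDm1 : (1 : ENNReal) ≤ ENNReal.ofReal Dm := by
    simpa using ENNReal.ofReal_le_ofReal hI1
  by_cases hr1 : 1 < r
  · -- large radius : both balls are everything
    have hsub : {u | grho G o v u < 2*r} ⊆ {u | grho G o v u < r} := by
      intro u _
      exact lt_of_le_of_lt (hone u) hr1
    calc muBall G q o α v (2*r) = TreeAux6.muSet G q o α {u | grho G o v u < 2*r} := hball _
      _ ≤ TreeAux6.muSet G q o α {u | grho G o v u < r} := TreeAux6.muSet_mono hsub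
      _ = muBall G q o α v r := (hball r).symm
      _ ≤ ENNReal.ofReal Dm * muBall G q o α v r := by
          nth_rewrite 1 [← one_mul (muBall G q o α v r)]
          exact mul_le_mul_left hDm1 _
  · push_neg at hr1
    set n : ℕ := Nat.floor (-Real.log r) with hn
    have hlog0 : 0 ≤ -Real.log r := by
      have := Real.log_nonpos hr.le hr1
      linarith
    have hn1 : (n:ℝ) ≤ -Real.log r := Nat.floor_le hlog0
    have hn2 : -Real.log r < (n:ℝ) + 1 := Nat.lt_floor_add_one _
    have hrle : r ≤ Real.exp (-(n:ℝ)) := by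
      rw [← Real.exp_log hr]
      exact Real.exp_le_exp.2 (by linarith)
    have hrgt : Real.exp (-((n:ℝ)+1)) < r := by
      rw [← Real.exp_log hr]
      exact Real.exp_lt_exp.2 (by linarith)
    have hbridge : ∀ (u : V) (m : ℕ),
        m ≤ confNorm G o v u ↔ G.dist v u + 2*m ≤ G.dist o v + G.dist o u := by
      intro u m
      rw [confNorm, Nat.le_div_iff_mul_le (by norm_num : 0 < 2)]
      have t1 : G.dist v u ≤ G.dist v o + G.dist o u := hconn.dist_triangle
      have t2 : G.dist v o = G.dist o v := SimpleGraph.dist_comm ..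
      omega
    have hincl1 : {u | grho G o v u < 2*r}
        ⊆ {u | u = v ∨ G.dist v u + 2*n ≤ G.dist o v + G.dist o u} := by
      intro u hu
      simp only [Set.mem_setOf_eq] at hu ⊢
      by_cases huv : u = v
      · exact Or.inl huv
      right
      rw [grho, if_neg huv] at hu
      rw [← hbridge u n]
      by_contra hlt
      push_neg at hlt
      have hcn : (confNorm G o v u : ℝ) + 1 ≤ (n : ℝ) := by exact_mod_cast hlt
      have h2 : Real.exp (-(n:ℝ) + 1) ≤ Real.exp (-(confNorm G o v u : ℝ)) :=
        Real.exp_le_exp.2 (by linarith)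
      have h3 : Real.exp (-(n:ℝ) + 1) = Real.exp (-(n:ℝ)) * Real.exp 1 := by
        rw [← Real.exp_add]
      have he : (2:ℝ) < Real.exp 1 := by
        have := Real.exp_one_gt_d9
        linarith
      nlinarith [Real.exp_pos (-(n:ℝ))]
    have hincl2 : {u | u = v ∨ G.dist v u + 2*(n+1) ≤ G.dist o v + G.dist o u}
        ⊆ {u | grho G o v u < r} := by
      intro u hu
      simp only [Set.mem_setOf_eq] at hu ⊢
      by_cases huv : u = v
      · rw [grho, if_pos huv]
        exact hr
      rcases hu with h | h
      · exact absurd h huv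
      rw [grho, if_neg huv]
      have hcn : n + 1 ≤ confNorm G o v u := (hbridge u (n+1)).2 h
      have hcn' : ((n:ℝ) + 1) ≤ (confNorm G o v u : ℝ) := by exact_mod_cast hcn
      calc Real.exp (-(confNorm G o v u : ℝ)) ≤ Real.exp (-((n:ℝ)+1)) :=
            Real.exp_le_exp.2 (by linarith)
        _ < r := hrgt
    calc muBall G q o α v (2*r) = TreeAux6.muSet G q o α {u | grho G o v u < 2*r} := hball _
      _ ≤ TreeAux6.muSet G q o α
            {u | u = v ∨ G.dist v u + 2*n ≤ G.dist o v + G.dist o u} :=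
          TreeAux6.muSet_mono hincl1
      _ ≤ ENNReal.ofReal Dm * TreeAux6.muSet G q o α
            {u | u = v ∨ G.dist v u + 2*(n+1) ≤ G.dist o v + G.dist o u} :=
          TreeAux7.step hq hconn hacyc hreg o v α hα n
      _ ≤ ENNReal.ofReal Dm * TreeAux6.muSet G q o α {u | grho G o v u < r} :=
          mul_le_mul_right (TreeAux6.muSet_mono hincl2) _
      _ = ENNReal.ofReal Dm * muBall G q o α v r := by rw [hball]
end
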